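/- arXiv:2401.09708 — 12 statements merged into one kernel-verified Lean document; each statement's English description precedes it below -/
import Mathlib

section
/- For every integer N ≥ 2, every simple circuit on N sites is equivalent to exactly one of the N−1 canonical circuits F_{q,r} with (q,r) ∈ Q_N: there exists (q,r) ∈ Q_N with F equivalent to F_{q,r}, and F_{q,r} is not equivalent to F_{q',r'} whenever (q,r) ≠ (q',r') in Q_N. -/
/-- A simple circuit on `N` sites: a sequence (indexed by time `Fin N`, 0-indexed)
of residues modulo `N` in which every residue occurs exactly once. -/
def IsSimpleCircuit (N : ℕ) (F : Fin N → ZMod N) : Prop := Function.Bijective F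

/-- Swap move: swap time-adjacent entries at (0-indexed) positions `k`, `k+1`
provided their difference is not ≡ -1, 0, 1 (mod N). -/
def SwapMove (N : ℕ) (F G : Fin N → ZMod N) : Prop :=
  ∃ k : ℕ, ∃ h : k + 1 < N,
    F ⟨k, Nat.lt_of_succ_lt h⟩ - F ⟨k + 1, h⟩ ≠ -1 ∧
    F ⟨k, Nat.lt_of_succ_lt h⟩ - F ⟨k + 1, h⟩ ≠ 0 ∧
    F ⟨k, Nat.lt_of_succ_lt h⟩ - F ⟨k + 1, h⟩ ≠ 1 ∧
    G = F ∘ Equiv.swap ⟨k, Nat.lt_of_succ_lt h⟩ ⟨k + 1, h⟩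

/-- Cyclic-shift move: `(i₁, i₂, …, i_N) ↦ (i₂, …, i_N, i₁)`. -/
def CycMove (N : ℕ) (F G : Fin N → ZMod N) : Prop :=
  G = F ∘ (finRotate N)

/-- Equivalence of circuits: finitely many swap/cyclic moves. -/
def CircuitEquiv (N : ℕ) : (Fin N → ZMod N) → (Fin N → ZMod N) → Prop :=
  Relation.EqvGen (fun F G => SwapMove N F G ∨ CycMove N F G)

/-- The set `Q_N` of admissible pairs `(q, r)`. -/
def QN (N : ℕ) : Set (ℕ × ℕ) :=
  {qr | 2 ≤ qr.1 ∧ qr.1 ≤ N ∧ qr.1 ∣ N ∧ 1 ≤ qr.2 ∧ qr.2 < qr.1 ∧ Nat.gcd qr.1 qr.2 = 1}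

/-- The canonical circuit `F_{q,r}`: the entry at 0-indexed time `l = j·(N/q) + i`
is the residue `1 + j·r + i·q (mod N)`. -/
def canonicalCircuit (N q r : ℕ) : Fin N → ZMod N :=
  fun l => ((1 + (l.val / (N / q)) * r + (l.val % (N / q)) * q : ℕ) : ZMod N)

/-- The double staircase circuit `F_p = (1, 2, …, N−p, N, N−1, …, N−p+1)`. -/
def doubleStaircase (N p : ℕ) : Fin N → ZMod N :=
  fun l => if l.val < N - p then ((l.val + 1 : ℕ) : ZMod N)
           else ((2 * N - p - l.val : ℕ) : ZMod N)

/-- The generalized staircase circuit `F_{N,r}`, whose entry at 1-indexed time `l`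
is `1 + (l−1)·r (mod N)`. -/
def staircase (N r : ℕ) : Fin N → ZMod N :=
  fun l => ((1 + l.val * r : ℕ) : ZMod N)

/-- The invariant `C(F)`: the number of (0-indexed) time indices `l` such that some
earlier entry equals `F l + 1 (mod N)`. -/
def Cinv (N : ℕ) (F : Fin N → ZMod N) : ℕ :=
  (Finset.univ.filter (fun l : Fin N => ∃ k : Fin N, k < l ∧ F k = F l + 1)).card

set_option linter.unusedSectionVars false

open Finset

section Dev
variable {N : ℕ} [NeZero N]

/-- inverse position function of a bijective circuit -/
noncomputable def pinv (F : Fin N → ZMod N) (hF : Function.Bijective F) : ZMod N → Fin N :=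
  fun a => (Equiv.ofBijective F hF).symm a

lemma pinv_spec (F : Fin N → ZMod N) (hF : Function.Bijective F) (a : ZMod N) :
    F (pinv F hF a) = a := Equiv.ofBijective_apply_symm_apply F hF a

lemma pinv_eq (F : Fin N → ZMod N) (hF : Function.Bijective F) {l : Fin N} {a : ZMod N}
    (h : F l = a) : pinv F hF a = l := by
  apply hF.injective; rw [pinv_spec F hF a]; exact h.symm

/-- descent at `a`: `a+1` occurs strictly earlier than `a`. -/
def Desc (F : Fin N → ZMod N) (a : ZMod N) : Prop :=
  ∃ k l : Fin N, k < l ∧ F k = a + 1 ∧ F l = a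

instance (F : Fin N → ZMod N) : DecidablePred (Desc F) := fun a => by
  unfold Desc; infer_instance

lemma desc_iff (F : Fin N → ZMod N) (hF : Function.Bijective F) (a : ZMod N) :
    Desc F a ↔ pinv F hF (a + 1) < pinv F hF a := by
  constructor
  · rintro ⟨k, l, hkl, hk, hl⟩
    rw [pinv_eq F hF hk, pinv_eq F hF hl]; exact hkl
  · intro h
    exact ⟨_, _, h, pinv_spec F hF (a+1), pinv_spec F hF a⟩

lemma cinv_eq (F : Fin N → ZMod N) (hF : Function.Bijective F) :
    Cinv N F = (univ.filter (Desc F)).card := by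
  classical
  unfold Cinv
  apply Finset.card_bij (fun l _ => F l)
  · intro l hl
    simp only [mem_filter, mem_univ, true_and] at hl ⊢
    obtain ⟨k, hkl, hk⟩ := hl
    exact ⟨k, l, hkl, hk, rfl⟩
  · intro a ha b hb h
    exact hF.injective h
  · intro a ha
    simp only [mem_filter, mem_univ, true_and] at ha
    obtain ⟨k, l, hkl, hk, hl⟩ := ha
    refine ⟨l, ?_, hl⟩
    simp only [mem_filter, mem_univ, true_and]
    exact ⟨k, hkl, by rw [hk, hl]⟩



lemma swap_lt {i j u v : Fin N} (hj : (j:ℕ) = (i:ℕ)+1)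
    (huv : ¬(u = i ∧ v = j)) (hvu : ¬(u = j ∧ v = i)) :
    (Equiv.swap i j u < Equiv.swap i j v ↔ u < v) := by
  simp only [Equiv.swap_apply_def]
  split_ifs <;> (simp only [Fin.ext_iff, Fin.lt_def] at *) <;> omega

lemma pinv_comp (F : Fin N → ZMod N) (hF : Function.Bijective F) (σ : Equiv.Perm (Fin N))
    (a : ZMod N) :
    pinv (F ∘ σ) (hF.comp σ.bijective) a = σ.symm (pinv F hF a) := by
  apply pinv_eq
  simp [pinv_spec F hF a]

lemma swapMove_desc {F G : Fin N → ZMod N} (h : SwapMove N F G) (hF : Function.Bijective F)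
    (a : ZMod N) : Desc G a ↔ Desc F a := by
  obtain ⟨k, hk, h1, h2, h3, rfl⟩ := h
  set i : Fin N := ⟨k, Nat.lt_of_succ_lt hk⟩
  set j : Fin N := ⟨k+1, hk⟩
  have hG : Function.Bijective (F ∘ Equiv.swap i j) := hF.comp (Equiv.swap i j).bijective
  rw [desc_iff _ hG, desc_iff _ hF, pinv_comp F hF, pinv_comp F hF, Equiv.symm_swap]
  apply swap_lt (by simp [i, j])
  · rintro ⟨h4, h5⟩
    apply h3
    have e1 : F i = a + 1 := by rw [← h4, pinv_spec F hF (a+1)]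
    have e2 : F j = a := by rw [← h5, pinv_spec F hF a]
    rw [e1, e2]; ring
  · rintro ⟨h4, h5⟩
    apply h1
    have e1 : F j = a + 1 := by rw [← h4, pinv_spec F hF (a+1)]
    have e2 : F i = a := by rw [← h5, pinv_spec F hF a]
    rw [e1, e2]; ring

lemma swapMove_bij {F G : Fin N → ZMod N} (h : SwapMove N F G) :
    Function.Bijective F ↔ Function.Bijective G := by
  obtain ⟨k, hk, h1, h2, h3, rfl⟩ := h
  exact (Function.Bijective.of_comp_iff F (Equiv.swap _ _).bijective).symm

lemma cycMove_bij {F G : Fin N → ZMod N} (h : CycMove N F G) :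
    Function.Bijective F ↔ Function.Bijective G := by
  rw [h]
  exact (Function.Bijective.of_comp_iff F (finRotate N).bijective).symm

lemma add_one_ne (hN : 2 ≤ N) (a : ZMod N) : a + 1 ≠ a := by
  haveI : Fact (1 < N) := ⟨hN⟩
  intro h
  have : (1 : ZMod N) = 0 := by
    have := congrArg (fun t => t - a) h
    simpa using this
  exact one_ne_zero this

lemma sub_one_ne (hN : 2 ≤ N) (a : ZMod N) : a - 1 ≠ a := by
  intro h
  have := add_one_ne hN (a - 1)
  rw [sub_add_cancel, h] at this
  exact this rfl

lemma cycMove_desc {F G : Fin N → ZMod N} (h : CycMove N F G) (hF : Function.Bijective F)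
    (hN : 2 ≤ N) (a : ZMod N) :
    Desc G a ↔ (a = F ⟨0, by omega⟩ ∨ (Desc F a ∧ a + 1 ≠ F ⟨0, by omega⟩)) := by
  obtain ⟨n, rfl⟩ : ∃ n, N = n + 1 := ⟨N - 1, by omega⟩
  have hG : Function.Bijective G := (cycMove_bij h).mp hF
  set z : Fin (n+1) := ⟨0, by omega⟩ with hz
  set a0 := F z with ha0
  have hGF : ∀ p : Fin (n+1), G p = F (p + 1) := by
    intro p; rw [h]; simp [finRotate_succ_apply]
  have hpF0 : pinv F hF a0 = z := pinv_eq F hF rfl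
  have key : ∀ x : ZMod (n+1), x ≠ a0 →
      (pinv F hF x).val ≥ 1 ∧ pinv G hG x = ⟨(pinv F hF x).val - 1, by omega⟩ := by
    intro x hx
    have hp : pinv F hF x ≠ z := by
      intro hcon
      apply hx
      rw [← pinv_spec F hF x, hcon, ← ha0]
    have h1 : (pinv F hF x).val ≥ 1 := by
      rcases Nat.eq_zero_or_pos (pinv F hF x).val with h0 | h0
      · exact absurd (Fin.ext h0) hp
      · omega
    refine ⟨h1, pinv_eq G hG ?_⟩
    rw [hGF]
    have hlt' := (pinv F hF x).isLt
    have : (⟨(pinv F hF x).val - 1, by omega⟩ + 1 : Fin (n+1)) = pinv F hF x := by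
      apply Fin.ext
      simp only [Fin.add_def, Fin.val_one', Fin.val_mk]
      rw [Nat.mod_eq_of_lt (by omega : 1 < n+1), Nat.mod_eq_of_lt (by omega)]
      omega
    rw [this, pinv_spec F hF x]
  have keyG0 : pinv G hG a0 = ⟨n, by omega⟩ := by
    apply pinv_eq G hG
    rw [hGF]
    have : (⟨n, by omega⟩ + 1 : Fin (n+1)) = z := by
      apply Fin.ext
      simp only [Fin.add_def, Fin.val_one', Fin.val_mk, hz]
      rw [Nat.mod_eq_of_lt (by omega : 1 < n+1), Nat.mod_self]
    rw [this]
  by_cases ha : a = a0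
  · subst ha
    simp only [← hz, ← ha0]
    have h1 : a0 + 1 ≠ a0 := add_one_ne hN a0
    obtain ⟨hge, hpg⟩ := key (a0 + 1) h1
    rw [desc_iff G hG, keyG0, hpg]
    simp only [eq_self_iff_true, true_or, iff_true]
    rw [Fin.lt_def]
    simp only
    have : (pinv F hF (a0+1)).val ≤ n := by omega
    have hne : pinv F hF (a0 + 1) ≠ z := by
      intro hcon
      apply h1
      rw [← pinv_spec F hF (a0+1), hcon]
    have : (pinv F hF (a0+1)).val < n + 1 := (pinv F hF (a0+1)).isLt
    omega
  · by_cases hb : a + 1 = a0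
    · have hane : a ≠ a0 := ha
      obtain ⟨hge, hpg⟩ := key a hane
      rw [desc_iff G hG, hb, keyG0, hpg]
      simp only [Fin.lt_def]
      have : (pinv F hF a).val < n + 1 := (pinv F hF a).isLt
      constructor
      · intro hcon; omega
      · rintro (hcon | ⟨-, hcon⟩)
        · exact absurd hcon ha
        · exact absurd rfl hcon
    · obtain ⟨hge1, hpg1⟩ := key a ha
      obtain ⟨hge2, hpg2⟩ := key (a+1) hb
      rw [desc_iff G hG, desc_iff F hF, hpg1, hpg2]
      simp only [Fin.lt_def]
      constructor
      · intro hcon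
        right
        refine ⟨by omega, hb⟩
      · rintro (hcon | ⟨hlt, -⟩)
        · exact absurd hcon ha
        · omega

lemma desc_first (F : Fin N → ZMod N) (hF : Function.Bijective F) (hN : 2 ≤ N) :
    ¬ Desc F (F ⟨0, by omega⟩) := by
  rw [desc_iff F hF, pinv_eq F hF rfl]
  intro hcon
  have h2 := Fin.lt_def.mp hcon
  simp only [Fin.val_mk] at h2
  omega

lemma desc_first_pred (F : Fin N → ZMod N) (hF : Function.Bijective F) (hN : 2 ≤ N) :
    Desc F (F ⟨0, by omega⟩ - 1) := by
  rw [desc_iff F hF, sub_add_cancel, pinv_eq F hF rfl, Fin.lt_def]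
  have h1 : pinv F hF (F ⟨0, by omega⟩ - 1) ≠ ⟨0, by omega⟩ := by
    intro hcon
    have := pinv_spec F hF (F ⟨0, by omega⟩ - 1)
    rw [hcon] at this
    exact sub_one_ne hN _ this.symm
  have h2 : (pinv F hF (F ⟨0, by omega⟩ - 1)).val ≠ 0 := fun hc => h1 (Fin.ext hc)
  simpa using Nat.pos_of_ne_zero h2

lemma cycMove_cinv {F G : Fin N → ZMod N} (h : CycMove N F G) (hF : Function.Bijective F)
    (hN : 2 ≤ N) : Cinv N G = Cinv N F := by
  classical
  have hG : Function.Bijective G := (cycMove_bij h).mp hF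
  rw [cinv_eq F hF, cinv_eq G hG]
  set a0 := F ⟨0, by omega⟩ with ha0
  have hfilt : Finset.univ.filter (Desc G) =
      insert a0 ((Finset.univ.filter (Desc F)).erase (a0 - 1)) := by
    ext x
    simp only [Finset.mem_filter, Finset.mem_univ, true_and, Finset.mem_insert,
      Finset.mem_erase]
    rw [cycMove_desc h hF hN x, ← ha0]
    constructor
    · rintro (hx | ⟨hd, hne⟩)
      · exact Or.inl hx
      · refine Or.inr ⟨?_, hd⟩
        intro hc
        apply hne
        rw [hc, sub_add_cancel]
    · rintro (hx | ⟨hne, hd⟩)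
      · exact Or.inl hx
      · refine Or.inr ⟨hd, ?_⟩
        intro hc
        apply hne
        rw [← hc]
        ring
  rw [hfilt]
  have hmem : a0 - 1 ∈ Finset.univ.filter (Desc F) := by
    simp only [Finset.mem_filter, Finset.mem_univ, true_and]
    exact desc_first_pred F hF hN
  have hnotmem : a0 ∉ (Finset.univ.filter (Desc F)).erase (a0 - 1) := by
    intro hc
    have := Finset.mem_of_mem_erase hc
    simp only [Finset.mem_filter, Finset.mem_univ, true_and] at this
    exact desc_first F hF hN this
  rw [Finset.card_insert_of_notMem hnotmem, Finset.card_erase_of_mem hmem]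
  have : 0 < (Finset.univ.filter (Desc F)).card := Finset.card_pos.mpr ⟨_, hmem⟩
  omega

lemma swapMove_cinv {F G : Fin N → ZMod N} (h : SwapMove N F G) (hF : Function.Bijective F) :
    Cinv N G = Cinv N F := by
  classical
  have hG : Function.Bijective G := by
    obtain ⟨k, hk, h1, h2, h3, rfl⟩ := h
    exact hF.comp (Equiv.swap _ _).bijective
  rw [cinv_eq F hF, cinv_eq G hG]
  congr 1
  ext x
  simp only [Finset.mem_filter, Finset.mem_univ, true_and]
  exact swapMove_desc h hF x

theorem circuitEquiv_invariant (hN : 2 ≤ N) {F G : Fin N → ZMod N} (h : CircuitEquiv N F G) :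
    (Function.Bijective F ↔ Function.Bijective G) ∧
    (Function.Bijective F → Cinv N F = Cinv N G) := by
  induction h with
  | rel x y hxy =>
    rcases hxy with hs | hc
    · exact ⟨swapMove_bij hs, fun hx => (swapMove_cinv hs hx).symm⟩
    · exact ⟨cycMove_bij hc, fun hx => (cycMove_cinv hc hx hN).symm⟩
  | refl x => exact ⟨Iff.rfl, fun _ => rfl⟩
  | symm x y hxy ih => exact ⟨ih.1.symm, fun hy => (ih.2 (ih.1.mpr hy)).symm⟩
  | trans x y z hxy hyz ih1 ih2 =>
    exact ⟨ih1.1.trans ih2.1, fun hx => (ih1.2 hx).trans (ih2.2 (ih1.1.mp hx))⟩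

lemma rtg_swap_equiv {F G : Fin N → ZMod N}
    (h : Relation.ReflTransGen (SwapMove N) F G) : CircuitEquiv N F G := by
  induction h with
  | refl => exact Relation.EqvGen.refl _
  | tail h1 h2 ih => exact Relation.EqvGen.trans _ _ _ ih (Relation.EqvGen.rel _ _ (Or.inl h2))

lemma bubble {G : Fin N → ZMod N} (hG : Function.Bijective G) {k : ℕ} (hk : k < N) :
    ∀ d (F' : Fin N → ZMod N) (hF' : Function.Bijective F'),
      (∀ a, Desc F' a ↔ Desc G a) →
      (∀ l : Fin N, l.val < k → F' l = G l) →
      (pinv F' hF' (G ⟨k, hk⟩)).val = k + d →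
      ∃ F'', Relation.ReflTransGen (SwapMove N) F' F'' ∧ ∃ _ : Function.Bijective F'',
        (∀ a, Desc F'' a ↔ Desc G a) ∧ (∀ l : Fin N, l.val < k → F'' l = G l) ∧
        F'' ⟨k, hk⟩ = G ⟨k, hk⟩ := by
  intro d
  induction d with
  | zero =>
    intro F' hF' hd' hag hp
    refine ⟨F', Relation.ReflTransGen.refl, hF', hd', hag, ?_⟩
    have heq : pinv F' hF' (G ⟨k, hk⟩) = ⟨k, hk⟩ := Fin.ext (by simp only [Fin.val_mk]; omega)
    calc F' ⟨k, hk⟩ = F' (pinv F' hF' (G ⟨k, hk⟩)) := by rw [heq]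
    _ = G ⟨k, hk⟩ := pinv_spec F' hF' _
  | succ d ih =>
    intro F' hF' hd' hag hp
    set a := G ⟨k, hk⟩ with hadef
    set p := pinv F' hF' a with hpdef
    have hpval : p.val = k + d + 1 := hp
    have hlt : (k + d) + 1 < N := by rw [← hpval]; exact p.isLt
    set i : Fin N := ⟨k + d, Nat.lt_of_succ_lt hlt⟩ with hidef
    set j : Fin N := ⟨k + d + 1, hlt⟩ with hjdef
    have hiv : (i : ℕ) = k + d := rfl
    have hjv : (j : ℕ) = k + d + 1 := rfl
    have hij : i ≠ j := by intro hc; rw [Fin.ext_iff, hiv, hjv] at hc; omega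
    have hjp : j = p := Fin.ext (by rw [hjv]; omega)
    have hFj : F' j = a := by rw [hjp, hpdef]; exact pinv_spec F' hF' a
    set b := F' i with hbdef
    have hGk : pinv G hG a = ⟨k, hk⟩ := pinv_eq G hG rfl
    have hGkv : (pinv G hG a).val = k := by rw [hGk]
    have hba : b ≠ a := by
      intro hc
      apply hij
      apply hF'.injective
      rw [hFj, ← hc]
    have hb1 : b ≠ a + 1 := by
      intro hc
      have hpi : pinv F' hF' (a + 1) = i := pinv_eq F' hF' (by rw [← hbdef, hc])
      have hdesc : Desc F' a := by
        rw [desc_iff F' hF', hpi, ← hpdef, Fin.lt_def, hiv]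
        omega
      have hdG := (hd' a).mp hdesc
      rw [desc_iff G hG, Fin.lt_def, hGkv] at hdG
      set l0 := pinv G hG (a + 1) with hl0
      have hagl0 : F' l0 = G l0 := hag l0 (by omega)
      have heq2 : pinv F' hF' (a + 1) = l0 := by
        apply pinv_eq F' hF'
        rw [hagl0, hl0]
        exact pinv_spec G hG (a + 1)
      rw [hpi] at heq2
      have hv : i.val = l0.val := by rw [heq2]
      rw [hiv] at hv
      omega
    have hbm1 : b ≠ a - 1 := by
      intro hc
      have hb1a : b + 1 = a := by rw [hc]; ring
      have hpb : pinv F' hF' b = i := pinv_eq F' hF' rfl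
      have hnd : ¬ Desc F' b := by
        rw [desc_iff F' hF', hb1a, ← hpdef, hpb, Fin.lt_def, hiv]
        omega
      have hndG : ¬ Desc G b := fun hc2 => hnd ((hd' b).mpr hc2)
      rw [desc_iff G hG, hb1a, Fin.lt_def, hGkv] at hndG
      have hne : pinv G hG b ≠ pinv G hG a := by
        intro hcc
        apply hba
        have h5 := pinv_spec G hG b
        rw [hcc, hGk] at h5
        rw [← h5]
      have hnev : (pinv G hG b).val ≠ k := by
        rw [← hGkv]
        exact fun hcv => hne (Fin.ext hcv)
      have hlt0 : (pinv G hG b).val < k := by omega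
      set l0 := pinv G hG b with hl0
      have hagl0 : F' l0 = G l0 := hag l0 hlt0
      have heq2 : pinv F' hF' b = l0 := by
        apply pinv_eq F' hF'
        rw [hagl0, hl0]
        exact pinv_spec G hG b
      rw [hpb] at heq2
      have hv : i.val = l0.val := by rw [heq2]
      rw [hiv] at hv
      omega
    have hFj' : F' ⟨k + d + 1, hlt⟩ = a := hFj
    have hsw : SwapMove N F' (F' ∘ Equiv.swap i j) := by
      refine ⟨k + d, hlt, ?_, ?_, ?_, rfl⟩
      · intro hcc
        rw [hFj'] at hcc
        apply hbm1
        have h6 : b = -1 + a := sub_eq_iff_eq_add.mp hcc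
        rw [h6]; ring
      · intro hcc
        rw [hFj'] at hcc
        exact hba (sub_eq_zero.mp hcc)
      · intro hcc
        rw [hFj'] at hcc
        apply hb1
        have h6 : b = 1 + a := sub_eq_iff_eq_add.mp hcc
        rw [h6]; ring
    set F'' := F' ∘ Equiv.swap i j with hF''def
    have hF'' : Function.Bijective F'' := hF'.comp (Equiv.swap i j).bijective
    have hd'' : ∀ x, Desc F'' x ↔ Desc G x := fun x => (swapMove_desc hsw hF' x).trans (hd' x)
    have hag'' : ∀ l : Fin N, l.val < k → F'' l = G l := by
      intro l hl
      have h1 : l ≠ i := by intro hc; rw [hc, hiv] at hl; omega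
      have h2 : l ≠ j := by intro hc; rw [hc, hjv] at hl; omega
      rw [hF''def]
      simp only [Function.comp_apply, Equiv.swap_apply_of_ne_of_ne h1 h2]
      exact hag l hl
    have hp'' : (pinv F'' hF'' a).val = k + d := by
      have heq3 : pinv F'' hF'' a = i := by
        apply pinv_eq
        rw [hF''def]
        simp only [Function.comp_apply, Equiv.swap_apply_left]
        exact hFj
      rw [heq3, hiv]
    obtain ⟨F₃, hsteps, hF₃, hh1, hh2, hh3⟩ := ih F'' hF'' hd'' hag'' hp''
    exact ⟨F₃, Relation.ReflTransGen.head hsw hsteps, hF₃, hh1, hh2, hh3⟩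

theorem sameDesc_equiv {F G : Fin N → ZMod N} (hF : Function.Bijective F)
    (hG : Function.Bijective G) (hd : ∀ a, Desc F a ↔ Desc G a) : CircuitEquiv N F G := by
  apply rtg_swap_equiv
  suffices h : ∀ k, k ≤ N → ∃ F', Relation.ReflTransGen (SwapMove N) F F' ∧
      ∃ _ : Function.Bijective F', (∀ a, Desc F' a ↔ Desc G a) ∧
      (∀ l : Fin N, l.val < k → F' l = G l) by
    obtain ⟨F', hsteps, hF', hdesc, hag⟩ := h N le_rfl
    have : F' = G := funext fun l => hag l l.isLt
    rwa [this] at hsteps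
  intro k
  induction k with
  | zero => exact fun _ => ⟨F, Relation.ReflTransGen.refl, hF, hd, fun l hl => absurd hl (by omega)⟩
  | succ k ihk =>
    intro hk1
    have hk : k < N := by omega
    obtain ⟨F', hsteps, hF', hdesc, hag⟩ := ihk (by omega)
    have hge : k ≤ (pinv F' hF' (G ⟨k, hk⟩)).val := by
      by_contra hcon
      push_neg at hcon
      set l0 := pinv F' hF' (G ⟨k, hk⟩) with hl0
      have h1 : F' l0 = G ⟨k, hk⟩ := pinv_spec F' hF' _
      have h2 : F' l0 = G l0 := hag l0 hcon
      have h3 : l0 = ⟨k, hk⟩ := hG.injective (by rw [← h2, h1])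
      rw [h3] at hcon
      simp only [Fin.val_mk] at hcon
      omega
    obtain ⟨F'', hsteps2, hF'', hd2, hag2, hk2⟩ :=
      bubble hG hk ((pinv F' hF' (G ⟨k, hk⟩)).val - k) F' hF' hdesc hag (by omega)
    refine ⟨F'', hsteps.trans hsteps2, hF'', hd2, ?_⟩
    intro l hl
    rcases Nat.lt_or_ge l.val k with h | h
    · exact hag2 l h
    · have : l = ⟨k, hk⟩ := Fin.ext (by simp only [Fin.val_mk]; omega)
      rw [this, hk2]

lemma flip_lemma (hN : 2 ≤ N) {F : Fin N → ZMod N} (hF : Function.Bijective F) (x : ZMod N)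
    (hx : Desc F x) (hx' : ¬ Desc F (x - 1)) :
    ∃ G, Function.Bijective G ∧ CircuitEquiv N F G ∧
      (∀ a, Desc G a ↔ (a ≠ x ∧ (a = x - 1 ∨ Desc F a))) := by
  obtain ⟨p, hpdef⟩ : ∃ p, p = pinv F hF x := ⟨_, rfl⟩
  set G : Fin N → ZMod N := fun l =>
    if l.val = 0 then x else if l.val ≤ p.val then
      F ⟨l.val - 1, Nat.lt_of_le_of_lt (Nat.sub_le _ _) l.isLt⟩ else F l with hGdef
  have hpN : p.val < N := p.isLt
  have hG0 : G ⟨0, by omega⟩ = x := by simp [hGdef]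
  have hGmid : ∀ l : Fin N, l.val ≠ 0 → l.val ≤ p.val →
      G l = F ⟨l.val - 1, Nat.lt_of_le_of_lt (Nat.sub_le _ _) l.isLt⟩ := by
    intro l h1 h2
    simp only [hGdef]
    rw [if_neg h1, if_pos h2]
  have hGlt : ∀ m : Fin N, ∀ hmlt : m.val + 1 < N, m.val < p.val →
      G ⟨m.val + 1, hmlt⟩ = F m := by
    intro m hmlt hm
    rw [hGmid _ (show m.val + 1 ≠ 0 by omega) (show m.val + 1 ≤ p.val by omega)]
    exact congrArg F (Fin.ext (by simp))
  have hGgt : ∀ m : Fin N, p.val < m.val → G m = F m := by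
    intro m hm
    simp only [hGdef]
    rw [if_neg (by omega), if_neg (by omega)]
  have hGsurj : Function.Surjective G := by
    intro y
    obtain ⟨m, hm⟩ : ∃ m, m = pinv F hF y := ⟨_, rfl⟩
    rcases lt_trichotomy m.val p.val with h | h | h
    · exact ⟨⟨m.val + 1, Nat.lt_of_le_of_lt (by omega) hpN⟩,
        by rw [hGlt m (Nat.lt_of_le_of_lt (by omega) hpN) h, hm]; exact pinv_spec F hF y⟩
    · refine ⟨⟨0, by omega⟩, ?_⟩
      rw [hG0]
      have hmp : m = p := Fin.ext h
      rw [hm] at hmp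
      have h2 := pinv_spec F hF y
      rw [hmp, hpdef, pinv_spec F hF x] at h2
      exact h2
    · exact ⟨m, by rw [hGgt m h, hm]; exact pinv_spec F hF y⟩
  have hG : Function.Bijective G := by
    rw [Fintype.bijective_iff_surjective_and_card]
    exact ⟨hGsurj, by simp [ZMod.card]⟩
  have hpG0 : pinv G hG x = ⟨0, by omega⟩ := pinv_eq G hG hG0
  have key : ∀ y, y ≠ x → (pinv F hF y).val ≠ p.val ∧
      (pinv G hG y).val =
        (if (pinv F hF y).val < p.val then (pinv F hF y).val + 1 else (pinv F hF y).val) := by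
    intro y hy
    have hne : (pinv F hF y).val ≠ p.val := by
      intro hc
      apply hy
      have : pinv F hF y = p := Fin.ext hc
      rw [← pinv_spec F hF y, this, hpdef]
      exact pinv_spec F hF x
    refine ⟨hne, ?_⟩
    rcases Nat.lt_or_ge (pinv F hF y).val p.val with h | h
    · rw [if_pos h]
      have heq : pinv G hG y = ⟨(pinv F hF y).val + 1, Nat.lt_of_le_of_lt (by omega) hpN⟩ :=
        pinv_eq G hG (by rw [hGlt _ (Nat.lt_of_le_of_lt (by omega) hpN) h]; exact pinv_spec F hF y)
      rw [heq]
    · have h' : p.val < (pinv F hF y).val := by omega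
      rw [if_neg (by omega)]
      have : pinv G hG y = pinv F hF y :=
        pinv_eq G hG (by rw [hGgt _ h']; exact pinv_spec F hF y)
      rw [this]
  have hdescG : ∀ a, Desc G a ↔ (a ≠ x ∧ (a = x - 1 ∨ Desc F a)) := by
    intro a
    by_cases ha : a = x
    · subst ha
      rw [desc_iff G hG, hpG0]
      simp only [Fin.lt_def, Fin.val_mk]
      constructor
      · intro hc; omega
      · rintro ⟨hc, -⟩; exact absurd rfl hc
    · by_cases hb : a = x - 1
      · subst hb
        have hxx : x - 1 + 1 = x := by ring
        rw [desc_iff G hG, hxx, hpG0]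
        simp only [Fin.lt_def, Fin.val_mk]
        constructor
        · intro _
          refine ⟨ha, ?_⟩
          simp
        · intro _
          obtain ⟨-, h2⟩ := key (x - 1) ha
          have : (pinv G hG (x-1)).val ≠ 0 := by
            intro hc
            apply ha
            have : pinv G hG (x - 1) = ⟨0, by omega⟩ := Fin.ext (by simp [hc])
            rw [← pinv_spec G hG (x-1), this, hG0]
          omega
      · have hb1 : a + 1 ≠ x := fun hc => hb (by rw [← hc]; ring)
        obtain ⟨hne1, hv1⟩ := key a ha
        obtain ⟨hne2, hv2⟩ := key (a + 1) hb1
        rw [desc_iff G hG, desc_iff F hF]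
        simp only [Fin.lt_def]
        rw [hv1, hv2]
        constructor
        · intro h
          refine ⟨ha, Or.inr ?_⟩
          split_ifs at h <;> omega
        · rintro ⟨-, (hc | h)⟩
          · exact absurd hc hb
          · split_ifs <;> omega
  set H := G ∘ finRotate N with hHdef
  have hcyc : CycMove N G H := rfl
  have hH : Function.Bijective H := (cycMove_bij hcyc).mp hG
  have hdescH : ∀ a, Desc H a ↔ Desc F a := by
    intro a
    rw [cycMove_desc hcyc hG hN a]
    have hG0' : G ⟨0, by omega⟩ = x := hG0
    rw [hG0']
    by_cases ha : a = x
    · subst ha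
      simp only [eq_self_iff_true, true_or, true_iff]
      exact hx
    · by_cases hb : a + 1 = x
      · have hb' : a = x - 1 := by rw [← hb]; ring
        subst hb'
        constructor
        · rintro (hc | ⟨-, hc⟩)
          · exact absurd hc ha
          · exact absurd hb hc
        · intro hc; exact absurd hc hx'
      · rw [hdescG a]
        constructor
        · rintro (hc | ⟨⟨-, (hc | hd)⟩, -⟩)
          · exact absurd hc ha
          · exact absurd (by rw [hc]; ring) hb
          · exact hd
        · intro hd
          exact Or.inr ⟨⟨ha, Or.inr hd⟩, hb⟩
  refine ⟨G, hG, ?_, hdescG⟩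
  have h1 : CircuitEquiv N F H := sameDesc_equiv hF hH (fun a => (hdescH a).symm)
  have h2 : CircuitEquiv N G H := Relation.EqvGen.rel _ _ (Or.inr hcyc)
  exact Relation.EqvGen.trans _ _ _ h1 (Relation.EqvGen.symm _ _ h2)

/-- normal form circuit with descent set `{0, …, c-1}` -/
def nf (N c : ℕ) : Fin N → ZMod N := fun l =>
  if l.val + c < N then ((c + l.val : ℕ) : ZMod N) else ((N - 1 - l.val : ℕ) : ZMod N)

lemma nf_surj (c : ℕ) (hc : c ≤ N) : Function.Surjective (nf N c) := by
  intro a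
  have hv : a.val < N := a.val_lt
  have hcv : ((a.val : ℕ) : ZMod N) = a := ZMod.natCast_rightInverse a
  rcases Nat.lt_or_ge a.val c with h | h
  · refine ⟨⟨N - 1 - a.val, by omega⟩, ?_⟩
    unfold nf
    rw [if_neg (by simp only [Fin.val_mk]; omega)]
    simp only [Fin.val_mk]
    rw [show N - 1 - (N - 1 - a.val) = a.val by omega]
    exact hcv
  · refine ⟨⟨a.val - c, by omega⟩, ?_⟩
    unfold nf
    rw [if_pos (by simp only [Fin.val_mk]; omega)]
    simp only [Fin.val_mk]
    rw [show c + (a.val - c) = a.val by omega]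
    exact hcv

lemma nf_bij (c : ℕ) (hc : c ≤ N) : Function.Bijective (nf N c) := by
  rw [Fintype.bijective_iff_surjective_and_card]
  exact ⟨nf_surj c hc, by simp [ZMod.card]⟩

lemma nf_desc (c : ℕ) (hc1 : 1 ≤ c) (hc2 : c + 1 ≤ N) (a : ZMod N) :
    Desc (nf N c) a ↔ a.val < c := by
  have hbij := nf_bij (N := N) c (by omega)
  have hv : a.val < N := a.val_lt
  have hcv : ∀ b : ZMod N, ((b.val : ℕ) : ZMod N) = b := fun b => ZMod.natCast_rightInverse b
  have hpos1 : ∀ v : ℕ, c ≤ v → ∀ hvN : v < N,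
      pinv (nf N c) hbij ((v : ℕ) : ZMod N) = ⟨v - c, by omega⟩ := by
    intro v hcv' hvN
    apply pinv_eq
    unfold nf
    rw [if_pos (by simp only [Fin.val_mk]; omega)]
    simp only [Fin.val_mk]
    rw [show c + (v - c) = v by omega]
  have hpos2 : ∀ v : ℕ, v < c →
      pinv (nf N c) hbij ((v : ℕ) : ZMod N) = ⟨N - 1 - v, by omega⟩ := by
    intro v hvc
    apply pinv_eq
    unfold nf
    rw [if_neg (by simp only [Fin.val_mk]; omega)]
    simp only [Fin.val_mk]
    rw [show N - 1 - (N - 1 - v) = v by omega]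
  have ha : a = ((a.val : ℕ) : ZMod N) := (hcv a).symm
  obtain ⟨w, hwdef⟩ : ∃ w, w = (a.val + 1) % N := ⟨_, rfl⟩
  have hw : a + 1 = ((w : ℕ) : ZMod N) := by
    rw [hwdef, ZMod.natCast_mod]
    push_cast
    rw [hcv a]
  rw [desc_iff _ hbij, hw]
  conv_lhs => rw [ha]
  rcases Nat.lt_or_ge a.val c with hcase | hcase
  · have hwval : w = a.val + 1 := by rw [hwdef]; exact Nat.mod_eq_of_lt (by omega)
    rcases Nat.lt_or_ge (a.val + 1) c with h2 | h2
    · rw [hpos2 a.val hcase, hwval, hpos2 (a.val + 1) h2]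
      simp only [Fin.lt_def, Fin.val_mk]
      omega
    · rw [hpos2 a.val hcase, hwval, hpos1 (a.val + 1) h2 (by omega)]
      simp only [Fin.lt_def, Fin.val_mk]
      omega
  · rcases Nat.lt_or_ge (a.val + 1) N with h4 | h4
    · have hwval : w = a.val + 1 := by rw [hwdef]; exact Nat.mod_eq_of_lt h4
      rw [hpos1 a.val hcase hv, hwval, hpos1 (a.val + 1) (by omega) h4]
      simp only [Fin.lt_def, Fin.val_mk]
      omega
    · have hwval : w = 0 := by
        rw [hwdef, show a.val + 1 = N by omega, Nat.mod_self]
      rw [hpos1 a.val hcase hv, hwval, hpos2 0 (by omega)]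
      simp only [Fin.lt_def, Fin.val_mk]
      omega

lemma descset_card_pos {F : Fin N → ZMod N} (hF : Function.Bijective F) (hN : 2 ≤ N) :
    1 ≤ (Finset.univ.filter (Desc F)).card := by
  rw [Nat.one_le_iff_ne_zero, ← Nat.pos_iff_ne_zero]
  apply Finset.card_pos.mpr
  refine ⟨F ⟨N - 1, by omega⟩, ?_⟩
  simp only [Finset.mem_filter, Finset.mem_univ, true_and]
  rw [desc_iff F hF, pinv_eq F hF rfl, Fin.lt_def]
  simp only [Fin.val_mk]
  have h1 : pinv F hF (F ⟨N - 1, by omega⟩ + 1) ≠ ⟨N - 1, by omega⟩ := by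
    intro hc
    have h2 := pinv_spec F hF (F ⟨N - 1, by omega⟩ + 1)
    rw [hc] at h2
    exact add_one_ne hN _ h2.symm
  have h2 : (pinv F hF (F ⟨N - 1, by omega⟩ + 1)).val ≠ N - 1 :=
    fun hc => h1 (Fin.ext (by simp only [Fin.val_mk]; omega))
  have h3 := (pinv F hF (F ⟨N - 1, by omega⟩ + 1)).isLt
  omega

lemma descset_card_le {F : Fin N → ZMod N} (hF : Function.Bijective F) (hN : 2 ≤ N) :
    (Finset.univ.filter (Desc F)).card + 1 ≤ N := by
  by_contra hcon
  push_neg at hcon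
  have hcard : (Finset.univ.filter (Desc F)).card ≤ N := by
    calc (Finset.univ.filter (Desc F)).card ≤ (Finset.univ : Finset (ZMod N)).card :=
          Finset.card_le_card (Finset.filter_subset _ _)
    _ = N := by simp [ZMod.card]
  have heq : Finset.univ.filter (Desc F) = (Finset.univ : Finset (ZMod N)) := by
    apply Finset.eq_of_subset_of_card_le (Finset.filter_subset _ _)
    have : (Finset.univ : Finset (ZMod N)).card = N := by simp [ZMod.card]
    omega
  have : F ⟨0, by omega⟩ ∈ Finset.univ.filter (Desc F) :=
    (Finset.ext_iff.mp heq (F ⟨0, by omega⟩)).mpr (Finset.mem_univ _)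
  simp only [Finset.mem_filter, Finset.mem_univ, true_and] at this
  exact desc_first F hF hN this

lemma val_sub_one {x : ZMod N} (hx : x.val ≠ 0) : (x - 1).val = x.val - 1 := by
  have hv : x.val < N := x.val_lt
  have h1 : x - 1 = ((x.val - 1 : ℕ) : ZMod N) := by
    rw [Nat.cast_sub (by omega : 1 ≤ x.val)]
    simp [ZMod.natCast_rightInverse x]
  rw [h1, ZMod.val_cast_of_lt (by omega)]

lemma closed_is_interval {D : Finset (ZMod N)} (h : ∀ x ∈ D, x.val = 0 ∨ x - 1 ∈ D) :
    ∀ x : ZMod N, x ∈ D ↔ x.val < D.card := by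
  classical
  set S := D.image ZMod.val with hS
  have hvalinj : Function.Injective (ZMod.val : ZMod N → ℕ) :=
    (ZMod.natCast_rightInverse).injective
  have hcard : S.card = D.card := Finset.card_image_of_injective D hvalinj
  have hmemS : ∀ x : ZMod N, x ∈ D ↔ x.val ∈ S := by
    intro x
    constructor
    · intro hx; exact Finset.mem_image_of_mem _ hx
    · intro hx
      obtain ⟨y, hy, hyx⟩ := Finset.mem_image.mp hx
      rwa [hvalinj hyx] at hy
  have hdc : ∀ j : ℕ, j + 1 ∈ S → j ∈ S := by
    intro j hj
    obtain ⟨y, hy, hyx⟩ := Finset.mem_image.mp hj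
    rcases h y hy with h0 | h1
    · omega
    · have : (y - 1).val = j := by rw [val_sub_one (by omega)]; omega
      rw [← this]
      exact Finset.mem_image_of_mem _ h1
  have hall : ∀ j : ℕ, j ∈ S → ∀ i, i ≤ j → i ∈ S := by
    intro j
    induction j with
    | zero => intro hj i hi; rwa [Nat.le_zero.mp hi]
    | succ j ih =>
      intro hj i hi
      rcases Nat.eq_or_lt_of_le hi with h1 | h1
      · rwa [h1]
      · exact ih (hdc j hj) i (by omega)
  intro x
  constructor
  · intro hx
    have hsub : Finset.range (x.val + 1) ⊆ S := by
      intro i hi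
      exact hall x.val ((hmemS x).mp hx) i (by simpa using Nat.lt_succ_iff.mp (Finset.mem_range.mp hi))
    have := Finset.card_le_card hsub
    rw [Finset.card_range] at this
    omega
  · intro hx
    by_contra hcon
    have hnotS : x.val ∉ S := fun hc => hcon ((hmemS x).mpr hc)
    have hsub : S ⊆ Finset.range x.val := by
      intro j hj
      rw [Finset.mem_range]
      by_contra hc
      push_neg at hc
      exact hnotS (hall j hj x.val hc)
    have := Finset.card_le_card hsub
    rw [Finset.card_range] at this
    omega

theorem to_nf (hN : 2 ≤ N) : ∀ (F : Fin N → ZMod N), Function.Bijective F →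
    CircuitEquiv N F (nf N (Cinv N F)) := by
  classical
  suffices main : ∀ n (F : Fin N → ZMod N) (hF : Function.Bijective F),
      (∑ a ∈ Finset.univ.filter (Desc F), a.val) = n → CircuitEquiv N F (nf N (Cinv N F)) from
    fun F hF => main _ F hF rfl
  intro n
  induction n using Nat.strong_induction_on with
  | _ n ih =>
  intro F hF hsum
  have hc1 : 1 ≤ (Finset.univ.filter (Desc F)).card := descset_card_pos hF hN
  have hc2 : (Finset.univ.filter (Desc F)).card + 1 ≤ N := descset_card_le hF hN
  have hcinv : Cinv N F = (Finset.univ.filter (Desc F)).card := cinv_eq F hF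
  by_cases hD : ∀ x ∈ Finset.univ.filter (Desc F), x.val = 0 ∨
      x - 1 ∈ Finset.univ.filter (Desc F)
  · have hint := closed_is_interval hD
    apply sameDesc_equiv hF (nf_bij _ (by omega))
    intro a
    rw [nf_desc (Cinv N F) (by omega) (by omega) a, hcinv]
    rw [← hint a]
    simp only [Finset.mem_filter, Finset.mem_univ, true_and]
  · push_neg at hD
    obtain ⟨x, hxmem, hx0, hxnot⟩ := hD
    have hdx : Desc F x := (Finset.mem_filter.mp hxmem).2
    have hnd : ¬ Desc F (x - 1) := by
      intro hc
      exact hxnot (Finset.mem_filter.mpr ⟨Finset.mem_univ _, hc⟩)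
    obtain ⟨G, hG, hFG, hdG⟩ := flip_lemma hN hF x hdx hnd
    have hx1x : x - 1 ≠ x := sub_one_ne hN x
    have hfiltG : Finset.univ.filter (Desc G) =
        insert (x - 1) ((Finset.univ.filter (Desc F)).erase x) := by
      ext a
      simp only [Finset.mem_filter, Finset.mem_univ, true_and, Finset.mem_insert,
        Finset.mem_erase]
      rw [hdG a]
      constructor
      · rintro ⟨hax, (h1 | h2)⟩
        · exact Or.inl h1
        · exact Or.inr ⟨hax, h2⟩
      · rintro (h1 | ⟨hax, h2⟩)
        · exact ⟨h1 ▸ hx1x, Or.inl h1⟩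
        · exact ⟨hax, Or.inr h2⟩
    have hnotmem : (x - 1) ∉ (Finset.univ.filter (Desc F)).erase x := by
      intro hc
      exact hxnot (Finset.mem_of_mem_erase hc)
    have h7 : (∑ a ∈ (Finset.univ.filter (Desc F)).erase x, a.val) + x.val =
        ∑ a ∈ Finset.univ.filter (Desc F), a.val := Finset.sum_erase_add _ _ hxmem
    have hxval : (x - 1).val = x.val - 1 := val_sub_one hx0
    have hsumG : (∑ a ∈ Finset.univ.filter (Desc G), a.val) = n - 1 := by
      rw [hfiltG, Finset.sum_insert hnotmem, hxval]
      omega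
    have hxlen : 1 ≤ n := by
      have : x.val ≤ ∑ a ∈ Finset.univ.filter (Desc F), a.val :=
        Finset.single_le_sum (fun _ _ => Nat.zero_le _) hxmem
      omega
    have hrec := ih (n - 1) (by omega) G hG hsumG
    have hcFG : Cinv N F = Cinv N G := (circuitEquiv_invariant hN hFG).2 hF
    rw [← hcFG] at hrec
    exact Relation.EqvGen.trans _ _ _ hFG hrec

theorem canonical_props (hN : 2 ≤ N) (q r : ℕ) (hq2 : 2 ≤ q) (hqd : q ∣ N)
    (hr1 : 1 ≤ r) (hrq : r < q) (hg : Nat.gcd q r = 1) :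
    Function.Bijective (canonicalCircuit N q r) ∧
    Cinv N (canonicalCircuit N q r) = (N / q) * ((r : ZMod q)⁻¹).val := by
  classical
  haveI : NeZero q := ⟨by omega⟩
  haveI : Fact (1 < N) := ⟨by omega⟩
  obtain ⟨m, hNm⟩ : ∃ m, N = q * m := hqd
  have hqd : q ∣ N := ⟨m, hNm⟩
  have hm1 : 1 ≤ m := by
    rcases Nat.eq_zero_or_pos m with h | h
    · rw [h, Nat.mul_zero] at hNm; omega
    · exact h
  have hmNq : N / q = m := by rw [hNm]; exact Nat.mul_div_cancel_left m (by omega)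
  have hNm' : N = m * q := by rw [hNm]; ring
  have hqN : q ≤ N := Nat.le_of_dvd (by omega) hqd
  obtain ⟨b, hbdef⟩ : ∃ b, b = ((r : ZMod q)⁻¹).val := ⟨_, rfl⟩
  have hbq : b < q := by rw [hbdef]; exact ZMod.val_lt _
  have hcop : Nat.Coprime r q := Nat.Coprime.symm hg
  have hmul1 : ((r : ZMod q) * (r : ZMod q)⁻¹) = 1 := ZMod.coe_mul_inv_eq_one r hcop
  have hcast_b : ((b : ℕ) : ZMod q) = (r : ZMod q)⁻¹ := by
    rw [hbdef]; exact ZMod.natCast_rightInverse _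
  have hrb_cast : ((r * b : ℕ) : ZMod q) = ((1 : ℕ) : ZMod q) := by
    push_cast
    rw [hcast_b, hmul1]
  have hrbmod : r * b ≡ 1 [MOD q] := (ZMod.natCast_eq_natCast_iff _ _ _).mp hrb_cast
  have hrb : (r * b) % q = 1 := by
    have h0 := hrbmod
    unfold Nat.ModEq at h0
    rwa [Nat.mod_eq_of_lt (show 1 < q by omega)] at h0
  have hb1 : 1 ≤ b := by
    rcases Nat.eq_zero_or_pos b with h | h
    · rw [h, Nat.mul_zero, Nat.zero_mod] at hrb; omega
    · exact h
  have hbunit : IsUnit ((b : ℕ) : ZMod q) := by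
    apply IsUnit.of_mul_eq_one ((r : ℕ) : ZMod q)
    rw [hcast_b, mul_comm]
    exact hmul1
  have hcop_bq : Nat.Coprime b q := (ZMod.isUnit_iff_coprime b q).mp hbunit
  have hgqb : Nat.gcd q b = 1 := Nat.Coprime.symm hcop_bq
  -- position of each value
  have hposition : ∀ a : ZMod N, ∃ (j i : ℕ) (hlt : j * m + i < N),
      j = (b * (a - 1).val) % q ∧ i < m ∧ j < q ∧
      canonicalCircuit N q r ⟨j * m + i, hlt⟩ = a := by
    intro a
    obtain ⟨u, hu⟩ : ∃ u, u = (a - 1).val := ⟨_, rfl⟩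
    have hult : u < N := by rw [hu]; exact ZMod.val_lt _
    obtain ⟨j, hj⟩ : ∃ j, j = (b * u) % q := ⟨_, rfl⟩
    have hjq : j < q := by rw [hj]; exact Nat.mod_lt _ (by omega)
    have hrj : r * j ≡ u [MOD q] := by
      calc r * j = r * ((b * u) % q) := by rw [hj]
      _ ≡ r * (b * u) [MOD q] := Nat.ModEq.mul_left r (Nat.mod_modEq _ _)
      _ = (r * b) * u := by ring
      _ ≡ 1 * u [MOD q] := Nat.ModEq.mul_right u hrbmod
      _ = u := one_mul u
    obtain ⟨d, hd⟩ : ∃ d, d = u + N * r - r * j := ⟨_, rfl⟩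
    have hge : r * j ≤ N * r := by
      calc r * j ≤ r * N := Nat.mul_le_mul_left r (by omega)
      _ = N * r := by ring
    have hdeq : d + r * j = u + N * r := by omega
    have hqNr : q ∣ N * r := Dvd.dvd.mul_right hqd r
    have hqdvd : q ∣ d := by
      have h3 : d + r * j ≡ u [MOD q] := by
        rw [hdeq]
        calc u + N * r ≡ u + 0 [MOD q] :=
          Nat.ModEq.add_left u ((Nat.modEq_zero_iff_dvd).mpr hqNr)
        _ = u := by omega
      have h4 : d + r * j ≡ d + u [MOD q] := Nat.ModEq.add_left d hrj
      have h5 : d + u ≡ 0 + u [MOD q] := by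
        calc d + u ≡ u [MOD q] := h4.symm.trans h3
        _ = 0 + u := by omega
      exact (Nat.modEq_zero_iff_dvd).mp (Nat.ModEq.add_right_cancel' u h5)
    obtain ⟨t, ht⟩ : ∃ t, t = d % N := ⟨_, rfl⟩
    have htN : t < N := by rw [ht]; exact Nat.mod_lt _ (by omega)
    have hqt : q ∣ t := by
      have h6 := Nat.div_add_mod d N
      have h7 : t = d - N * (d / N) := by omega
      rw [h7]
      exact Nat.dvd_sub hqdvd (Dvd.dvd.mul_right hqd _)
    obtain ⟨i, hi⟩ : ∃ i, i = t / q := ⟨_, rfl⟩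
    have hti : t = i * q := by rw [hi]; exact (Nat.div_mul_cancel hqt).symm
    have him : i < m := by
      by_contra hcon
      push_neg at hcon
      have : m * q ≤ i * q := Nat.mul_le_mul_right q hcon
      omega
    have hlt : j * m + i < N := by
      have h2 : j * m + m = (j + 1) * m := by ring
      have h3 : (j + 1) * m ≤ q * m := Nat.mul_le_mul_right m (by omega)
      omega
    refine ⟨j, i, hlt, by rw [hj, hu], him, hjq, ?_⟩
    show ((1 + ((j * m + i) / (N / q)) * r + ((j * m + i) % (N / q)) * q : ℕ) : ZMod N) = a
    rw [hmNq]
    have hdiv : (j * m + i) / m = j := by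
      rw [mul_comm j m, Nat.mul_add_div (by omega), Nat.div_eq_of_lt him, Nat.add_zero]
    have hmod : (j * m + i) % m = i := by
      rw [mul_comm j m, Nat.mul_add_mod, Nat.mod_eq_of_lt him]
    rw [hdiv, hmod]
    have hmodN : 1 + j * r + i * q ≡ 1 + u [MOD N] := by
      have htd : t ≡ d [MOD N] := by rw [ht]; exact Nat.mod_modEq _ _
      have h5 : j * r + t ≡ u [MOD N] := by
        calc j * r + t ≡ j * r + d [MOD N] := Nat.ModEq.add_left _ htd
        _ = u + N * r := by rw [mul_comm j r]; omega
        _ ≡ u + 0 [MOD N] := Nat.ModEq.add_left u ((Nat.modEq_zero_iff_dvd).mpr ⟨r, rfl⟩)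
        _ = u := by omega
      calc 1 + j * r + i * q = 1 + (j * r + t) := by omega
      _ ≡ 1 + u [MOD N] := Nat.ModEq.add_left 1 h5
    have hcasteq : ((1 + j * r + i * q : ℕ) : ZMod N) = ((1 + u : ℕ) : ZMod N) :=
      (ZMod.natCast_eq_natCast_iff _ _ _).mpr hmodN
    rw [hcasteq]
    push_cast
    rw [hu, ZMod.natCast_rightInverse (a - 1)]
    ring
  have hsurj : Function.Surjective (canonicalCircuit N q r) := by
    intro a
    obtain ⟨j, i, hlt, -, -, -, heval⟩ := hposition a
    exact ⟨⟨j * m + i, hlt⟩, heval⟩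
  have hbij : Function.Bijective (canonicalCircuit N q r) := by
    rw [Fintype.bijective_iff_surjective_and_card]
    exact ⟨hsurj, by simp [ZMod.card]⟩
  -- descent criterion
  have hdesc : ∀ a : ZMod N, Desc (canonicalCircuit N q r) a ↔ q ≤ (b * (a - 1).val) % q + b := by
    intro a
    obtain ⟨j, i, hlt, hjdef, him, hjq, heval⟩ := hposition a
    obtain ⟨j', i', hlt', hjdef', him', hjq', heval'⟩ := hposition (a + 1)
    have hpa : pinv _ hbij a = ⟨j * m + i, hlt⟩ := pinv_eq _ hbij heval
    have hpa' : pinv _ hbij (a + 1) = ⟨j' * m + i', hlt'⟩ := pinv_eq _ hbij heval'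
    rw [desc_iff _ hbij, hpa, hpa', Fin.lt_def]
    simp only [Fin.val_mk]
    rw [← hjdef]
    have ha1 : (a + 1 - 1) = a := by ring
    rw [ha1] at hjdef'
    have hval : a.val = ((a - 1).val + 1) % N := by
      conv_lhs => rw [show a = (a - 1) + 1 by ring]
      rw [ZMod.val_add, ZMod.val_one]
    have hmq : a.val ≡ (a - 1).val + 1 [MOD q] :=
      Nat.ModEq.of_dvd hqd (by rw [hval]; exact Nat.mod_modEq _ _)
    have h9 : b * a.val ≡ b * ((a - 1).val) + b [MOD q] := by
      calc b * a.val ≡ b * ((a - 1).val + 1) [MOD q] := Nat.ModEq.mul_left b hmq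
      _ = b * (a - 1).val + b := by ring
    have h10 : b * (a - 1).val + b ≡ j + b [MOD q] :=
      Nat.ModEq.add_right b (by rw [hjdef]; exact (Nat.mod_modEq _ _).symm)
    have h11 : j' ≡ j + b [MOD q] := by
      rw [hjdef']
      exact (Nat.mod_modEq _ _).trans (h9.trans h10)
    have hj'j : j' = (j + b) % q := by
      have h12 : j' % q = (j + b) % q := h11
      have h13 : j' % q = j' := Nat.mod_eq_of_lt hjq'
      omega
    rcases Nat.lt_or_ge (j + b) q with hk | hk
    · have hj'eq : j' = j + b := by rw [hj'j]; exact Nat.mod_eq_of_lt hk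
      have hord : j * m + i < j' * m + i' := by
        have h1 : m ≤ b * m := Nat.le_mul_of_pos_left m (by omega)
        have h2 : j * m + b * m = (j + b) * m := by ring
        rw [hj'eq]
        omega
      omega
    · have hbq1 : j + b - q < q := by omega
      have hj'eq : j' = j + b - q := by
        rw [hj'j, Nat.mod_eq_sub_mod hk]
        exact Nat.mod_eq_of_lt hbq1
      have hord : j' * m + i' < j * m + i := by
        have h1 : j' + 1 ≤ j := by omega
        have h2 : (j' + 1) * m ≤ j * m := Nat.mul_le_mul_right m h1
        have h3 : (j' + 1) * m = j' * m + m := by ring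
        omega
      omega
  -- counting
  obtain ⟨QF, hQF⟩ : ∃ S, S = (Finset.range q).filter (fun w => q ≤ (b * w) % q + b) :=
    ⟨_, rfl⟩
  have hcardQ : QF.card = b := by
    have hbijQ : QF.card = (Finset.Ico (q - b) q).card := by
      apply Finset.card_bij (fun w _ => (b * w) % q)
      · intro w hw
        rw [hQF] at hw
        simp only [Finset.mem_filter, Finset.mem_range] at hw
        rw [Finset.mem_Ico]
        have := Nat.mod_lt (b * w) (show 0 < q by omega)
        omega
      · intro w hw w' hw' heq
        rw [hQF] at hw hw'
        simp only [Finset.mem_filter, Finset.mem_range] at hw hw'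
        have hmod : b * w ≡ b * w' [MOD q] := by
          unfold Nat.ModEq
          omega
        have := Nat.ModEq.cancel_left_of_coprime hgqb hmod
        unfold Nat.ModEq at this
        rw [Nat.mod_eq_of_lt hw.1, Nat.mod_eq_of_lt hw'.1] at this
        exact this
      · intro z hz
        rw [Finset.mem_Ico] at hz
        refine ⟨(z * r) % q, ?_, ?_⟩
        · rw [hQF]
          simp only [Finset.mem_filter, Finset.mem_range]
          have hzr : b * ((z * r) % q) ≡ z [MOD q] := by
            calc b * ((z * r) % q) ≡ b * (z * r) [MOD q] := Nat.ModEq.mul_left b (Nat.mod_modEq _ _)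
            _ = z * (r * b) := by ring
            _ ≡ z * 1 [MOD q] := Nat.ModEq.mul_left z hrbmod
            _ = z := by omega
          have hzeq : (b * ((z * r) % q)) % q = z := by
            unfold Nat.ModEq at hzr
            rw [Nat.mod_eq_of_lt hz.2] at hzr
            exact hzr
          constructor
          · exact Nat.mod_lt _ (by omega)
          · rw [hzeq]; omega
        · have hzr : b * ((z * r) % q) ≡ z [MOD q] := by
            calc b * ((z * r) % q) ≡ b * (z * r) [MOD q] := Nat.ModEq.mul_left b (Nat.mod_modEq _ _)
            _ = z * (r * b) := by ring
            _ ≡ z * 1 [MOD q] := Nat.ModEq.mul_left z hrbmod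
            _ = z := by omega
          unfold Nat.ModEq at hzr
          rw [Nat.mod_eq_of_lt hz.2] at hzr
          exact hzr
    rw [hbijQ, Nat.card_Ico]
    omega
  have hstep1 : (Finset.univ.filter (fun a : ZMod N => q ≤ (b * (a - 1).val) % q + b)).card
      = ((Finset.range N).filter (fun n => q ≤ (b * n) % q + b)).card := by
    apply Finset.card_bij (fun a _ => (a - 1).val)
    · intro a ha
      simp only [Finset.mem_filter, Finset.mem_univ, true_and] at ha
      simp only [Finset.mem_filter, Finset.mem_range]
      exact ⟨ZMod.val_lt _, ha⟩
    · intro a _ a' _ heq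
      have h2 : a - 1 = a' - 1 := by
        have hinj : Function.Injective (ZMod.val : ZMod N → ℕ) :=
          (ZMod.natCast_rightInverse).injective
        exact hinj heq
      have := congrArg (fun t => t + 1) h2
      simpa using this
    · intro n hn
      simp only [Finset.mem_filter, Finset.mem_range] at hn
      refine ⟨(n : ZMod N) + 1, ?_, ?_⟩
      · simp only [Finset.mem_filter, Finset.mem_univ, true_and]
        rw [add_sub_cancel_right, ZMod.val_cast_of_lt hn.1]
        exact hn.2
      · rw [add_sub_cancel_right, ZMod.val_cast_of_lt hn.1]
  have hstep2 : ((Finset.range N).filter (fun n => q ≤ (b * n) % q + b)).card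
      = ((Finset.range m) ×ˢ QF).card := by
    apply Finset.card_bij (fun n _ => (n / q, n % q))
    · intro n hn
      simp only [Finset.mem_filter, Finset.mem_range] at hn
      rw [Finset.mem_product]
      constructor
      · rw [Finset.mem_range]
        rw [Nat.div_lt_iff_lt_mul (show 0 < q by omega)]
        omega
      · rw [hQF]
        simp only [Finset.mem_filter, Finset.mem_range]
        refine ⟨Nat.mod_lt _ (by omega), ?_⟩
        have hmm : (b * n) % q = (b * (n % q)) % q := by
          conv_lhs => rw [Nat.mul_mod]
          conv_rhs => rw [Nat.mul_mod, Nat.mod_mod_of_dvd _ dvd_rfl]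
        omega
    · intro n hn n' hn' heq
      rw [Prod.mk.injEq] at heq
      have e1 := Nat.div_add_mod n q
      have e2 := Nat.div_add_mod n' q
      have e3 : q * (n / q) = q * (n' / q) := by rw [heq.1]
      omega
    · intro c hc
      rw [Finset.mem_product, Finset.mem_range, hQF] at hc
      obtain ⟨hc1, hc2⟩ := hc
      simp only [Finset.mem_filter, Finset.mem_range] at hc2
      refine ⟨c.1 * q + c.2, ?_, ?_⟩
      · simp only [Finset.mem_filter, Finset.mem_range]
        constructor
        · have h4 : (c.1 + 1) * q ≤ m * q := Nat.mul_le_mul_right q (by omega)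
          have h5 : (c.1 + 1) * q = c.1 * q + q := by ring
          omega
        · have h6 : (c.1 * q + c.2) % q = c.2 := by
            rw [mul_comm c.1 q, Nat.mul_add_mod, Nat.mod_eq_of_lt hc2.1]
          have hmm : (b * (c.1 * q + c.2)) % q = (b * c.2) % q := by
            conv_lhs => rw [Nat.mul_mod, h6]
            conv_rhs => rw [Nat.mul_mod, Nat.mod_eq_of_lt hc2.1]
          omega
      · have h6 : (c.1 * q + c.2) % q = c.2 := by
          rw [mul_comm c.1 q, Nat.mul_add_mod, Nat.mod_eq_of_lt hc2.1]
        have h7 : (c.1 * q + c.2) / q = c.1 := by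
          rw [mul_comm c.1 q, Nat.mul_add_div (by omega), Nat.div_eq_of_lt hc2.1, Nat.add_zero]
        rw [h6, h7]
  refine ⟨hbij, ?_⟩
  rw [cinv_eq _ hbij]
  have hfilteq : Finset.univ.filter (Desc (canonicalCircuit N q r)) =
      Finset.univ.filter (fun a : ZMod N => q ≤ (b * (a - 1).val) % q + b) := by
    ext a
    simp only [Finset.mem_filter, Finset.mem_univ, true_and]
    exact hdesc a
  rw [hfilteq, hstep1, hstep2, Finset.card_product, Finset.card_range, hcardQ, hmNq, ← hbdef]

lemma canonical_invariants (hN : 2 ≤ N) {q r : ℕ} (hq2 : 2 ≤ q) (hqd : q ∣ N)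
    (hr1 : 1 ≤ r) (hrq : r < q) (hg : Nat.gcd q r = 1) :
    ∃ m b, N = m * q ∧ 1 ≤ m ∧ 1 ≤ b ∧ b < q ∧ Nat.gcd b q = 1 ∧
      Cinv N (canonicalCircuit N q r) = m * b ∧ b = ((r : ZMod q)⁻¹).val ∧
      Function.Bijective (canonicalCircuit N q r) := by
  haveI : NeZero q := ⟨by omega⟩
  haveI : Fact (1 < q) := ⟨by omega⟩
  obtain ⟨hbij, hcinv⟩ := canonical_props hN q r hq2 hqd hr1 hrq hg
  obtain ⟨m, hNm⟩ : ∃ m, N = q * m := hqd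
  have hqd : q ∣ N := ⟨m, hNm⟩
  have hm1 : 1 ≤ m := by
    rcases Nat.eq_zero_or_pos m with h | h
    · rw [h, Nat.mul_zero] at hNm; omega
    · exact h
  have hmNq : N / q = m := by rw [hNm]; exact Nat.mul_div_cancel_left m (by omega)
  obtain ⟨b, hbdef⟩ : ∃ b, b = ((r : ZMod q)⁻¹).val := ⟨_, rfl⟩
  have hbq : b < q := by rw [hbdef]; exact ZMod.val_lt _
  have hcop : Nat.Coprime r q := Nat.Coprime.symm hg
  have hmul1 : ((r : ZMod q) * (r : ZMod q)⁻¹) = 1 := ZMod.coe_mul_inv_eq_one r hcop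
  have hcast_b : ((b : ℕ) : ZMod q) = (r : ZMod q)⁻¹ := by
    rw [hbdef]; exact ZMod.natCast_rightInverse _
  have hbunit : IsUnit ((b : ℕ) : ZMod q) := by
    apply IsUnit.of_mul_eq_one ((r : ℕ) : ZMod q)
    rw [hcast_b, mul_comm]
    exact hmul1
  have hcop_bq : Nat.Coprime b q := (ZMod.isUnit_iff_coprime b q).mp hbunit
  have hb1 : 1 ≤ b := by
    rcases Nat.eq_zero_or_pos b with h | h
    · exfalso
      rw [h] at hcast_b
      rw [← hcast_b] at hmul1
      simp only [Nat.cast_zero, mul_zero] at hmul1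
      exact zero_ne_one hmul1
    · exact h
  exact ⟨m, b, by rw [hNm]; ring, hm1, hb1, hbq, hcop_bq, by rw [hcinv, hmNq, hbdef], hbdef, hbij⟩
end Dev

/-- Every simple circuit on `N ≥ 2` sites is equivalent to exactly one of
the `N−1` canonical circuits `F_{q,r}` with `(q,r) ∈ Q_N`. -/
theorem classification_canonical (N : ℕ) (hN : 2 ≤ N)
    (F : Fin N → ZMod N) (hF : IsSimpleCircuit N F) :
    (∃ qr ∈ QN N, CircuitEquiv N F (canonicalCircuit N qr.1 qr.2)) ∧
    (∀ qr ∈ QN N, ∀ qr' ∈ QN N, qr ≠ qr' →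
      ¬ CircuitEquiv N (canonicalCircuit N qr.1 qr.2) (canonicalCircuit N qr'.1 qr'.2)) := by
  haveI : NeZero N := ⟨by omega⟩
  have hFb : Function.Bijective F := hF
  constructor
  · -- existence
    have hcinveq := cinv_eq F hFb
    have hc1 : 1 ≤ Cinv N F := by rw [hcinveq]; exact descset_card_pos hFb hN
    have hc2 : Cinv N F + 1 ≤ N := by rw [hcinveq]; exact descset_card_le hFb hN
    obtain ⟨c, hc⟩ : ∃ c, c = Cinv N F := ⟨_, rfl⟩
    obtain ⟨m, hm⟩ : ∃ m, m = Nat.gcd c N := ⟨_, rfl⟩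
    have hm_dvd_c : m ∣ c := hm ▸ Nat.gcd_dvd_left c N
    have hm_dvd_N : m ∣ N := hm ▸ Nat.gcd_dvd_right c N
    have hm1 : 1 ≤ m := by rw [hm]; exact Nat.gcd_pos_of_pos_left N (by omega)
    obtain ⟨q, hq⟩ : ∃ q, q = N / m := ⟨_, rfl⟩
    have hNq : N = m * q := by rw [hq]; exact (Nat.mul_div_cancel' hm_dvd_N).symm
    obtain ⟨b, hb⟩ : ∃ b, b = c / m := ⟨_, rfl⟩
    have hcb : c = m * b := by rw [hb]; exact (Nat.mul_div_cancel' hm_dvd_c).symm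
    have hcN : c < N := by omega
    have hb1 : 1 ≤ b := by
      rcases Nat.eq_zero_or_pos b with h0 | h0
      · rw [h0, Nat.mul_zero] at hcb; omega
      · exact h0
    have hbq : b < q := by
      by_contra hcon
      push_neg at hcon
      have h5 : m * q ≤ m * b := Nat.mul_le_mul_left m hcon
      omega
    have hq2 : 2 ≤ q := by
      have hmc : m ≤ c := Nat.le_of_dvd (by omega) hm_dvd_c
      by_contra hcon
      push_neg at hcon
      have h5 : m * q ≤ m * 1 := Nat.mul_le_mul_left m (by omega)
      rw [mul_one] at h5
      omega
    have hcop_bq : Nat.Coprime b q := by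
      rw [hb, hq, hm]
      exact Nat.coprime_div_gcd_div_gcd (by omega)
    haveI : NeZero q := ⟨by omega⟩
    haveI : Fact (1 < q) := ⟨by omega⟩
    have hbunit_cop : ((b : ℕ) : ZMod q) * ((b : ℕ) : ZMod q)⁻¹ = 1 :=
      ZMod.coe_mul_inv_eq_one b hcop_bq
    obtain ⟨r, hr⟩ : ∃ r, r = ((b : ZMod q)⁻¹).val := ⟨_, rfl⟩
    have hrq : r < q := by rw [hr]; exact ZMod.val_lt _
    have hcast_r : ((r : ℕ) : ZMod q) = ((b : ℕ) : ZMod q)⁻¹ := by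
      rw [hr]; exact ZMod.natCast_rightInverse _
    have hr_unit : IsUnit ((r : ℕ) : ZMod q) := by
      apply IsUnit.of_mul_eq_one ((b : ℕ) : ZMod q)
      rw [hcast_r, mul_comm]
      exact hbunit_cop
    have hcop_rq : Nat.Coprime r q := (ZMod.isUnit_iff_coprime r q).mp hr_unit
    have hr1 : 1 ≤ r := by
      rcases Nat.eq_zero_or_pos r with h0 | h0
      · exfalso
        rw [h0] at hcast_r
        simp only [Nat.cast_zero] at hcast_r
        rw [← hcast_r, mul_zero] at hbunit_cop
        exact zero_ne_one hbunit_cop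
      · exact h0
    have hgqr : Nat.gcd q r = 1 := Nat.Coprime.symm hcop_rq
    have hqdN : q ∣ N := ⟨m, by rw [hNq]; ring⟩
    obtain ⟨m', b', hNm', hm'1, hb'1, hb'q, hcop', hcinvC, hb'def, hbijC⟩ :=
      canonical_invariants hN hq2 hqdN hr1 hrq hgqr
    have hm'm : m' = m := by
      have h5 : m' * q = m * q := by rw [← hNm', hNq]
      exact Nat.eq_of_mul_eq_mul_right (by omega) h5
    have hinvr : ((r : ℕ) : ZMod q)⁻¹ = ((b : ℕ) : ZMod q) := by
      have h1 : ((r : ℕ) : ZMod q) * ((r : ℕ) : ZMod q)⁻¹ = 1 :=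
        ZMod.coe_mul_inv_eq_one r hcop_rq
      calc ((r : ℕ) : ZMod q)⁻¹
          = (((b : ℕ) : ZMod q) * ((b : ℕ) : ZMod q)⁻¹) * ((r : ℕ) : ZMod q)⁻¹ := by
            rw [hbunit_cop, one_mul]
      _ = ((b : ℕ) : ZMod q) * (((r : ℕ) : ZMod q) * ((r : ℕ) : ZMod q)⁻¹) := by
            rw [hcast_r]; ring
      _ = ((b : ℕ) : ZMod q) := by rw [h1, mul_one]
    have hb'b : b' = b := by rw [hb'def, hinvr]; exact ZMod.val_cast_of_lt hbq
    refine ⟨(q, r), ?_, ?_⟩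
    · simp only [QN, Set.mem_setOf_eq]
      exact ⟨hq2, Nat.le_of_dvd (by omega) hqdN, hqdN, hr1, hrq, hgqr⟩
    · have h1 : CircuitEquiv N F (nf N (Cinv N F)) := to_nf hN F hFb
      have h2 : CircuitEquiv N (canonicalCircuit N q r)
          (nf N (Cinv N (canonicalCircuit N q r))) := to_nf hN _ hbijC
      have h3 : Cinv N (canonicalCircuit N q r) = Cinv N F := by
        rw [hcinvC, hm'm, hb'b, ← hcb, hc]
      rw [h3] at h2
      exact Relation.EqvGen.trans _ _ _ h1 (Relation.EqvGen.symm _ _ h2)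
  · rintro ⟨q, r⟩ hqr ⟨q', r'⟩ hqr' hne hequiv
    simp only [QN, Set.mem_setOf_eq] at hqr hqr'
    obtain ⟨hq2, hqN, hqd, hr1, hrq, hg⟩ := hqr
    obtain ⟨hq2', hqN', hqd', hr1', hrq', hg'⟩ := hqr'
    obtain ⟨m, b, hNm, hm1, hb1, hbq, hcop, hcinv, hbdef, hbij⟩ :=
      canonical_invariants hN hq2 hqd hr1 hrq hg
    obtain ⟨m', b', hNm', hm'1, hb'1, hb'q, hcop', hcinv', hb'def, hbij'⟩ :=
      canonical_invariants hN hq2' hqd' hr1' hrq' hg'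
    have hceq : Cinv N (canonicalCircuit N q r) = Cinv N (canonicalCircuit N q' r') :=
      (circuitEquiv_invariant hN hequiv).2 hbij
    rw [hcinv, hcinv'] at hceq
    have hgcd1 : Nat.gcd (m * b) N = m := by
      rw [hNm, Nat.gcd_mul_left, hcop, mul_one]
    have hgcd2 : Nat.gcd (m' * b') N = m' := by
      rw [hNm', Nat.gcd_mul_left, hcop', mul_one]
    have hmm' : m = m' := by rw [← hgcd1, ← hgcd2, hceq]
    have hqq' : q = q' := by
      have h5 : m * q = m * q' := by rw [← hNm, hNm', hmm']
      exact Nat.eq_of_mul_eq_mul_left (by omega) h5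
    have hbb' : b = b' := by
      rw [← hmm'] at hceq
      exact Nat.eq_of_mul_eq_mul_left (by omega) hceq
    subst hqq'
    haveI : NeZero q := ⟨by omega⟩
    have hinv_eq : ((r : ℕ) : ZMod q)⁻¹ = ((r' : ℕ) : ZMod q)⁻¹ := by
      have h1 : (((r : ℕ) : ZMod q)⁻¹).val = (((r' : ℕ) : ZMod q)⁻¹).val := by
        rw [← hbdef, ← hb'def, hbb']
      exact (ZMod.natCast_rightInverse).injective h1
    have hrr' : ((r : ℕ) : ZMod q) = ((r' : ℕ) : ZMod q) := by
      have hcr : Nat.Coprime r q := Nat.Coprime.symm hg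
      have hcr' : Nat.Coprime r' q := Nat.Coprime.symm hg'
      have h1 : ((r : ℕ) : ZMod q) * ((r : ℕ) : ZMod q)⁻¹ = 1 :=
        ZMod.coe_mul_inv_eq_one r hcr
      have h2 : ((r' : ℕ) : ZMod q) * ((r' : ℕ) : ZMod q)⁻¹ = 1 :=
        ZMod.coe_mul_inv_eq_one r' hcr'
      calc ((r : ℕ) : ZMod q)
          = ((r : ℕ) : ZMod q) * (((r' : ℕ) : ZMod q) * ((r' : ℕ) : ZMod q)⁻¹) := by
            rw [h2, mul_one]
      _ = ((r' : ℕ) : ZMod q) * (((r : ℕ) : ZMod q) * ((r : ℕ) : ZMod q)⁻¹) := by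
            rw [hinv_eq]; ring
      _ = ((r' : ℕ) : ZMod q) := by rw [h1, mul_one]
    have hfinal : r = r' := by
      have h3 := congrArg ZMod.val hrr'
      rwa [ZMod.val_cast_of_lt hrq, ZMod.val_cast_of_lt hrq'] at h3
    exact hne (by rw [hfinal])
end

section
/- For every integer N ≥ 2, every simple circuit on N sites is equivalent to the double-staircase circuit F_p for some p ∈ {1, …, N−1}. -/
namespace DSAux

variable {n : ℕ}

instance fact1 (n : ℕ) : Fact (1 < n + 2) := ⟨by omega⟩

/-- descent set of a circuit (given as an equiv) -/
def Dsf (e : Fin (n+2) ≃ ZMod (n+2)) : Finset (ZMod (n+2)) :=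
  Finset.univ.filter fun i => e.symm (i+1) < e.symm i

def sameOrient (e f : Fin (n+2) ≃ ZMod (n+2)) : Prop :=
  ∀ i, e.symm i < e.symm (i+1) ↔ f.symm i < f.symm (i+1)

lemma succ_ne (i : ZMod (n+2)) : i + 1 ≠ i := by
  intro h
  have h1 : (1 : ZMod (n+2)) ≠ 0 := by
    intro h0
    have := congrArg ZMod.val h0
    rw [ZMod.val_one, ZMod.val_zero] at this
    omega
  exact h1 (by nth_rewrite 2 [← add_zero i] at h; exact add_left_cancel h)

lemma mem_Dsf {e : Fin (n+2) ≃ ZMod (n+2)} {i : ZMod (n+2)} :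
    i ∈ Dsf e ↔ e.symm (i+1) < e.symm i := by simp [Dsf]

lemma not_mem_Dsf {e : Fin (n+2) ≃ ZMod (n+2)} {i : ZMod (n+2)} :
    i ∉ Dsf e ↔ e.symm i < e.symm (i+1) := by
  rw [mem_Dsf, not_lt]
  constructor
  · intro h
    exact lt_of_le_of_ne h (fun hc => succ_ne i (e.symm.injective hc.symm))
  · exact le_of_lt

lemma mem_Dsf_iff_not {e : Fin (n+2) ≃ ZMod (n+2)} {i : ZMod (n+2)} :
    i ∈ Dsf e ↔ ¬ (e.symm i < e.symm (i+1)) := by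
  rw [← not_mem_Dsf, not_not]

lemma sameOrient_of_Dsf_eq {e f : Fin (n+2) ≃ ZMod (n+2)} (h : Dsf e = Dsf f) :
    sameOrient e f := by
  intro i
  rw [← not_mem_Dsf, ← not_mem_Dsf, h]

lemma Dsf_eq_of_sameOrient {e f : Fin (n+2) ≃ ZMod (n+2)} (h : sameOrient e f) :
    Dsf e = Dsf f := by
  ext i
  rw [mem_Dsf_iff_not, mem_Dsf_iff_not, h i]

lemma ce_refl (F : Fin (n+2) → ZMod (n+2)) : CircuitEquiv (n+2) F F := Relation.EqvGen.refl F

lemma ce_trans {F G H : Fin (n+2) → ZMod (n+2)} (h1 : CircuitEquiv (n+2) F G)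
    (h2 : CircuitEquiv (n+2) G H) : CircuitEquiv (n+2) F H := Relation.EqvGen.trans _ _ _ h1 h2

lemma ce_swap {F G : Fin (n+2) → ZMod (n+2)} (h : SwapMove (n+2) F G) :
    CircuitEquiv (n+2) F G := Relation.EqvGen.rel _ _ (Or.inl h)

lemma ce_cyc {F G : Fin (n+2) → ZMod (n+2)} (h : CycMove (n+2) F G) :
    CircuitEquiv (n+2) F G := Relation.EqvGen.rel _ _ (Or.inr h)


/-- inversion count between two circuits -/
def invC (e f : Fin (n+2) ≃ ZMod (n+2)) : ℕ :=
  (Finset.univ.filter fun q : ZMod (n+2) × ZMod (n+2) =>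
    e.symm q.1 < e.symm q.2 ∧ f.symm q.2 < f.symm q.1).card

lemma eq_of_invC_zero {e f : Fin (n+2) ≃ ZMod (n+2)} (h : invC e f = 0) : ⇑e = ⇑f := by
  have key : ∀ a b, e.symm a < e.symm b → f.symm a < f.symm b := by
    intro a b hab
    rw [invC, Finset.card_eq_zero] at h
    have hnm : (a, b) ∉ (Finset.univ.filter fun q : ZMod (n+2) × ZMod (n+2) =>
        e.symm q.1 < e.symm q.2 ∧ f.symm q.2 < f.symm q.1) := by
      rw [h]; exact Finset.notMem_empty _
    simp only [Finset.mem_filter, Finset.mem_univ, true_and, not_and] at hnm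
    have hne : f.symm a ≠ f.symm b := by
      intro hc
      exact absurd (f.symm.injective hc ▸ hab) (lt_irrefl _)
    exact lt_of_le_of_ne (not_lt.mp (hnm hab)) hne
  have hsm : StrictMono ⇑(e.trans f.symm) := by
    intro k l hkl
    have : e.symm (e k) < e.symm (e l) := by simpa using hkl
    simpa using key (e k) (e l) this
  have hrange : Set.range ⇑(e.trans f.symm) = Set.range (id : Fin (n+2) → Fin (n+2)) := by
    rw [Set.range_id, Set.range_eq_univ]
    exact (e.trans f.symm).surjective
  have hid : ⇑(e.trans f.symm) = id := (hsm.range_inj strictMono_id).mp hrange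
  funext k
  have hk := congrFun hid k
  simp only [Equiv.trans_apply, id_eq] at hk
  calc e k = f (f.symm (e k)) := (f.apply_symm_apply _).symm
    _ = f k := by rw [hk]

lemma swap_lt_iff {k l u v : Fin (n+2)} (hkl : (l : ℕ) = (k : ℕ) + 1)
    (h1 : ¬(u = k ∧ v = l)) (h2 : ¬(u = l ∧ v = k)) :
    Equiv.swap k l u < Equiv.swap k l v ↔ u < v := by
  have key : ∀ w : Fin (n+2), w ≠ k → w ≠ l → Equiv.swap k l w = w :=
    fun w h h' => Equiv.swap_apply_of_ne_of_ne h h'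
  rcases eq_or_ne u k with rfl | huk
  · rw [Equiv.swap_apply_left]
    rcases eq_or_ne v u with rfl | hvk
    · rw [Equiv.swap_apply_left]
      exact iff_of_false (lt_irrefl _) (lt_irrefl _)
    rcases eq_or_ne v l with rfl | hvl
    · exact absurd ⟨rfl, rfl⟩ h1
    · rw [key v hvk hvl, Fin.lt_def, Fin.lt_def]
      have h3 : v.val ≠ u.val := fun hh => hvk (Fin.ext hh)
      have h4 : v.val ≠ l.val := fun hh => hvl (Fin.ext hh)
      omega
  rcases eq_or_ne u l with rfl | hul
  · rw [Equiv.swap_apply_right]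
    rcases eq_or_ne v k with rfl | hvk
    · exact absurd ⟨rfl, rfl⟩ h2
    rcases eq_or_ne v u with rfl | hvl
    · rw [Equiv.swap_apply_right, Fin.lt_def, Fin.lt_def]; omega
    · rw [key v hvk hvl, Fin.lt_def, Fin.lt_def]
      have h3 : v.val ≠ k.val := fun hh => hvk (Fin.ext hh)
      have h4 : v.val ≠ u.val := fun hh => hvl (Fin.ext hh)
      omega
  · rw [key u huk hul]
    have h3 : u.val ≠ k.val := fun hh => huk (Fin.ext hh)
    have h4 : u.val ≠ l.val := fun hh => hul (Fin.ext hh)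
    rcases eq_or_ne v k with rfl | hvk
    · rw [Equiv.swap_apply_left, Fin.lt_def, Fin.lt_def]; omega
    rcases eq_or_ne v l with rfl | hvl
    · rw [Equiv.swap_apply_right, Fin.lt_def, Fin.lt_def]; omega
    · rw [key v hvk hvl]

lemma lemA : ∀ (m : ℕ) (e f : Fin (n+2) ≃ ZMod (n+2)), invC e f ≤ m → sameOrient e f →
    CircuitEquiv (n+2) ⇑e ⇑f := by
  intro m
  induction m with
  | zero =>
    intro e f h _
    rw [eq_of_invC_zero (Nat.le_zero.mp h)]
    exact ce_refl _
  | succ m ih =>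
    intro e f h hso
    by_cases h0 : invC e f = 0
    · rw [eq_of_invC_zero h0]; exact ce_refl _
    -- find an adjacent inverted pair
    have hSne : (Finset.univ.filter fun q : Fin (n+2) × Fin (n+2) =>
        q.1 < q.2 ∧ f.symm (e q.2) < f.symm (e q.1)).Nonempty := by
      obtain ⟨⟨a, b⟩, hab⟩ := Finset.card_pos.mp (Nat.pos_of_ne_zero h0)
      simp only [Finset.mem_filter, Finset.mem_univ, true_and] at hab
      refine ⟨(e.symm a, e.symm b), ?_⟩
      simp only [Finset.mem_filter, Finset.mem_univ, true_and, Equiv.apply_symm_apply]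
      exact hab
    obtain ⟨⟨k, l⟩, hmem, hmin⟩ := Finset.exists_min_image
      (Finset.univ.filter fun q : Fin (n+2) × Fin (n+2) =>
        q.1 < q.2 ∧ f.symm (e q.2) < f.symm (e q.1))
      (fun q : Fin (n+2) × Fin (n+2) => (q.2 : ℕ) - (q.1 : ℕ)) hSne
    simp only [Finset.mem_filter, Finset.mem_univ, true_and] at hmem
    obtain ⟨hkl, hinv⟩ := hmem
    have hl : (l : ℕ) = (k : ℕ) + 1 := by
      by_contra hc
      have hkl' : (k : ℕ) + 1 < (l : ℕ) := by
        have := Fin.lt_def.mp hkl; omega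
      set m' : Fin (n+2) := ⟨(k : ℕ) + 1, by omega⟩ with hm'
      have hkm : k ≠ m' := by
        intro hc'; have := congrArg Fin.val hc'; simp [hm'] at this
      have hne : f.symm (e k) ≠ f.symm (e m') :=
        fun hc' => hkm (e.injective (f.symm.injective hc'))
      rcases lt_or_gt_of_ne hne with hlt | hgt
      · have hml : m' < l := Fin.lt_def.mpr (by simp only [hm']; omega)
        have hS : (m', l) ∈ (Finset.univ.filter fun q : Fin (n+2) × Fin (n+2) =>
            q.1 < q.2 ∧ f.symm (e q.2) < f.symm (e q.1)) := by
          simp only [Finset.mem_filter, Finset.mem_univ, true_and]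
          exact ⟨hml, hinv.trans hlt⟩
        have := hmin _ hS
        simp only [hm'] at this
        omega
      · have hkm' : k < m' := Fin.lt_def.mpr (by simp only [hm']; omega)
        have hS : (k, m') ∈ (Finset.univ.filter fun q : Fin (n+2) × Fin (n+2) =>
            q.1 < q.2 ∧ f.symm (e q.2) < f.symm (e q.1)) := by
          simp only [Finset.mem_filter, Finset.mem_univ, true_and]
          exact ⟨hkm', hgt⟩
        have := hmin _ hS
        simp only [hm'] at this
        have := Fin.lt_def.mp hkl
        omega
    set a := e k with ha
    set b := e l with hb
    have hknel : k ≠ l := ne_of_lt hkl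
    have hab0 : a - b ≠ 0 := by
      rw [sub_ne_zero]; exact fun hc => hknel (e.injective hc)
    have hab1 : a - b ≠ 1 := by
      intro hc
      have hba : a = b + 1 := by linear_combination hc
      have h1 : e.symm b < e.symm (b + 1) ↔ f.symm b < f.symm (b + 1) := hso b
      rw [← hba] at h1
      have he : ¬ (e.symm b < e.symm a) := by
        simp only [ha, hb, Equiv.symm_apply_apply]
        exact not_lt.mpr (le_of_lt hkl)
      exact he (h1.mpr hinv)
    have habm1 : a - b ≠ -1 := by
      intro hc
      have hba : b = a + 1 := by linear_combination -hc
      have h1 : e.symm a < e.symm (a + 1) ↔ f.symm a < f.symm (a + 1) := hso a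
      rw [← hba] at h1
      have he : e.symm a < e.symm b := by
        simp only [ha, hb, Equiv.symm_apply_apply]; exact hkl
      exact absurd hinv (not_lt.mpr (le_of_lt (h1.mp he)))
    -- perform the swap
    set e' : Fin (n+2) ≃ ZMod (n+2) := (Equiv.swap k l).trans e with he'
    have he'symm : ∀ x, e'.symm x = Equiv.swap k l (e.symm x) := by
      intro x
      simp [he', Equiv.symm_trans_apply]
    have hlt : (k : ℕ) + 1 < n + 2 := by have := l.isLt; omega
    have hfin1 : (⟨(k : ℕ), Nat.lt_of_succ_lt hlt⟩ : Fin (n+2)) = k := Fin.ext rfl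
    have hfin2 : (⟨(k : ℕ) + 1, hlt⟩ : Fin (n+2)) = l := Fin.ext hl.symm
    have hswap : SwapMove (n+2) ⇑e ⇑e' := by
      refine ⟨(k : ℕ), hlt, ?_, ?_, ?_, ?_⟩
      · rw [hfin1, hfin2]; exact habm1
      · rw [hfin1, hfin2]; exact hab0
      · rw [hfin1, hfin2]; exact hab1
      · rw [hfin1, hfin2, he']; rfl
    -- inversion count decreases
    have hmemab : (a, b) ∈ (Finset.univ.filter fun q : ZMod (n+2) × ZMod (n+2) =>
        e.symm q.1 < e.symm q.2 ∧ f.symm q.2 < f.symm q.1) := by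
      simp only [Finset.mem_filter, Finset.mem_univ, true_and, ha, hb,
        Equiv.symm_apply_apply]
      exact ⟨hkl, hinv⟩
    have hlk : ¬ (Equiv.swap k l k < Equiv.swap k l l) := by
      rw [Equiv.swap_apply_left, Equiv.swap_apply_right]
      rw [Fin.lt_def]; omega
    have hfilter : (Finset.univ.filter fun q : ZMod (n+2) × ZMod (n+2) =>
        e'.symm q.1 < e'.symm q.2 ∧ f.symm q.2 < f.symm q.1)
        = (Finset.univ.filter fun q : ZMod (n+2) × ZMod (n+2) =>
            e.symm q.1 < e.symm q.2 ∧ f.symm q.2 < f.symm q.1).erase (a, b) := by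
      ext ⟨x, y⟩
      simp only [Finset.mem_filter, Finset.mem_erase, Finset.mem_univ, true_and,
        he'symm, Prod.mk.injEq, Ne, not_and]
      have hxa : e.symm x = k ↔ x = a := by
        rw [Equiv.symm_apply_eq, ← ha]
      have hyb : e.symm y = l ↔ y = b := by
        rw [Equiv.symm_apply_eq, ← hb]
      have hxb : e.symm x = l ↔ x = b := by
        rw [Equiv.symm_apply_eq, ← hb]
      have hya : e.symm y = k ↔ y = a := by
        rw [Equiv.symm_apply_eq, ← ha]
      constructor
      · rintro ⟨hxy, hf⟩
        by_cases hc1 : x = a ∧ y = b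
        · exfalso
          rw [hc1.1, hc1.2, ha, hb, Equiv.symm_apply_apply, Equiv.symm_apply_apply] at hxy
          exact hlk hxy
        by_cases hc2 : x = b ∧ y = a
        · exfalso
          rw [hc2.1, hc2.2] at hf
          exact absurd hinv (not_lt.mpr (le_of_lt hf))
        · have := (swap_lt_iff hl
            (fun hc => hc1 ⟨hxa.mp hc.1, hyb.mp hc.2⟩)
            (fun hc => hc2 ⟨hxb.mp hc.1, hya.mp hc.2⟩)).mp hxy
          exact ⟨fun hxeq hyeq => hc1 ⟨hxeq, hyeq⟩, this, hf⟩
      · rintro ⟨hne', hxy, hf⟩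
        by_cases hc2 : x = b ∧ y = a
        · exfalso
          rw [hc2.1, hc2.2, ha, hb, Equiv.symm_apply_apply, Equiv.symm_apply_apply] at hxy
          rw [Fin.lt_def] at hxy; omega
        · refine ⟨(swap_lt_iff hl
            (fun hc => hne' (hxa.mp hc.1) (hyb.mp hc.2))
            (fun hc => hc2 ⟨hxb.mp hc.1, hya.mp hc.2⟩)).mpr hxy, hf⟩
    have hinvC : invC e' f = invC e f - 1 := by
      rw [invC, hfilter, Finset.card_erase_of_mem hmemab]; rfl
    have hso' : sameOrient e' f := by
      intro i
      rw [← hso i, he'symm, he'symm]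
      apply swap_lt_iff hl
      · rintro ⟨hx, hy⟩
        have hia : i = a := by rw [ha]; exact (Equiv.symm_apply_eq _).mp hx
        have hib : i + 1 = b := by rw [hb]; exact (Equiv.symm_apply_eq _).mp hy
        exact habm1 (by rw [← hia, ← hib]; ring)
      · rintro ⟨hx, hy⟩
        have hia : i = b := by rw [hb]; exact (Equiv.symm_apply_eq _).mp hx
        have hib : i + 1 = a := by rw [ha]; exact (Equiv.symm_apply_eq _).mp hy
        exact hab1 (by rw [← hia, ← hib]; ring)
    have hpos : 1 ≤ invC e f := Nat.pos_of_ne_zero h0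
    exact ce_trans (ce_swap hswap) (ih e' f (by omega) hso')

lemma cycleRange_lt_iff {m u v : Fin (n+2)} (hu : u ≠ m) (hv : v ≠ m) :
    m.cycleRange u < m.cycleRange v ↔ u < v := by
  have hval : ∀ w : Fin (n+2), w ≠ m →
      ((m.cycleRange w : Fin (n+2)) : ℕ) = if w < m then (w : ℕ) + 1 else (w : ℕ) := by
    intro w hw
    rcases lt_or_gt_of_ne hw with h | h
    · rw [if_pos h, Fin.coe_cycleRange_of_lt h]
    · rw [if_neg (not_lt.mpr h.le), Fin.cycleRange_of_gt h]
  have h1 := hval u hu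
  have h2 := hval v hv
  have hu' : u < m ∨ m < u := lt_or_gt_of_ne hu
  have hv' : v < m ∨ m < v := lt_or_gt_of_ne hv
  simp only [Fin.lt_def] at *
  split_ifs at h1 h2 <;> omega

lemma cycleRange_ne_zero {m w : Fin (n+2)} (hw : w ≠ m) : m.cycleRange w ≠ 0 := by
  intro hc
  rw [← Fin.cycleRange_self m] at hc
  exact hw (m.cycleRange.injective hc)

lemma rotSymm_apply (u : Fin (n+2)) :
    (finRotate (n+2)).symm u = u - 1 := by
  rw [Equiv.symm_apply_eq, finRotate_succ_apply, sub_add_cancel]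

lemma rotSymm_zero : (finRotate (n+2)).symm 0 = Fin.last (n+1) := by
  rw [Equiv.symm_apply_eq, finRotate_succ_apply, Fin.last_add_one]

lemma rotSymm_val {u : Fin (n+2)} (hu : u ≠ 0) :
    (((finRotate (n+2)).symm u : Fin (n+2)) : ℕ) = (u : ℕ) - 1 := by
  set w := (finRotate (n+2)).symm u with hw
  have hwu : u = w + 1 := by
    rw [hw, ← finRotate_succ_apply, Equiv.apply_symm_apply]
  have hwne : w ≠ Fin.last (n+1) := by
    intro hc
    rw [hc, Fin.last_add_one] at hwu
    exact hu hwu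
  have hwlt : w < Fin.last (n+1) := lt_of_le_of_ne (Fin.le_last w) hwne
  have h1 : ((w + 1 : Fin (n+2)) : ℕ) = (w : ℕ) + 1 := Fin.val_add_one_of_lt hwlt
  have h2 : (u : ℕ) = (w : ℕ) + 1 := by rw [hwu, h1]
  omega

lemma movePlus (e : Fin (n+2) ≃ ZMod (n+2)) {i : ZMod (n+2)}
    (hi : i ∈ Dsf e) (hi1 : i + 1 ∉ Dsf e) :
    ∃ h : Fin (n+2) ≃ ZMod (n+2), CircuitEquiv (n+2) ⇑e ⇑h ∧
      Dsf h = insert (i+1) ((Dsf e).erase i) := by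
  set s := i + 1 with hs
  have hs_ne : s ≠ i := succ_ne i
  have hsrc1 : e.symm s < e.symm (s + 1) := not_mem_Dsf.mp hi1
  have hsrc2 : e.symm s < e.symm i := mem_Dsf.mp hi
  set m := e.symm s with hm
  set g : Fin (n+2) ≃ ZMod (n+2) := (e.symm.trans m.cycleRange).symm with hg
  have hgsymm : ∀ x, g.symm x = m.cycleRange (e.symm x) := fun x => by
    rw [hg, Equiv.symm_symm]; rfl
  have hgs : g.symm s = 0 := by rw [hgsymm, ← hm, Fin.cycleRange_self]
  have hxm : ∀ x, x ≠ s → e.symm x ≠ m :=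
    fun x hx hc => hx (e.symm.injective (hc.trans hm))
  have hgne : ∀ x, x ≠ s → g.symm x ≠ 0 := by
    intro x hx
    rw [hgsymm]
    exact cycleRange_ne_zero (hxm x hx)
  have hso : sameOrient e g := by
    intro j
    by_cases hj : j = s
    · rw [hj]
      refine iff_of_true hsrc1 ?_
      rw [hgs]
      exact lt_of_le_of_ne (Fin.zero_le _) (Ne.symm (hgne (s+1) (succ_ne s)))
    · by_cases hj1 : j + 1 = s
      · have hji : j = i := add_right_cancel (hj1.trans hs)
        rw [hji]
        refine iff_of_false ?_ ?_
        · rw [← hs]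
          exact not_lt.mpr hsrc2.le
        · rw [← hs, hgs]
          exact Fin.not_lt_zero _
      · rw [hgsymm, hgsymm]
        exact (cycleRange_lt_iff (hxm j hj) (hxm (j+1) hj1)).symm
  have hequiv1 : CircuitEquiv (n+2) ⇑e ⇑g := lemA (invC e g) e g le_rfl hso
  set h : Fin (n+2) ≃ ZMod (n+2) := (finRotate (n+2)).trans g with hh
  have hcyc : CycMove (n+2) ⇑g ⇑h := by rw [hh]; rfl
  have hhsymm : ∀ x, h.symm x = (finRotate (n+2)).symm (g.symm x) := by
    intro x
    rw [hh]; rfl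
  have hDg : Dsf g = Dsf e := (Dsf_eq_of_sameOrient hso).symm
  refine ⟨h, ce_trans hequiv1 (ce_cyc hcyc), ?_⟩
  ext j
  rw [mem_Dsf, hhsymm, hhsymm]
  by_cases hj : j = s
  · rw [hj, hgs, rotSymm_zero]
    refine iff_of_true ?_ (Finset.mem_insert_self _ _)
    have hne := hgne (s+1) (succ_ne s)
    have hvne : ((g.symm (s+1) : Fin (n+2)) : ℕ) ≠ 0 := fun hc => hne (Fin.ext hc)
    rw [Fin.lt_def, rotSymm_val hne, Fin.val_last]
    have := (g.symm (s+1)).isLt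
    omega
  · by_cases hj1 : j + 1 = s
    · have hji : j = i := add_right_cancel (hj1.trans hs)
      rw [hj1, hgs, rotSymm_zero, hji]
      refine iff_of_false ?_ ?_
      · have hne := hgne i (fun hc => hs_ne hc.symm)
        have hvne : ((g.symm i : Fin (n+2)) : ℕ) ≠ 0 := fun hc => hne (Fin.ext hc)
        rw [Fin.lt_def, rotSymm_val hne, Fin.val_last]
        have := (g.symm i).isLt
        omega
      · intro hc
        rcases Finset.mem_insert.mp hc with hc | hc
        · exact hs_ne hc.symm
        · exact (Finset.notMem_erase _ _) hc
    · have hne1 := hgne j hj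
      have hne2 := hgne (j+1) hj1
      have hv1 : ((g.symm j : Fin (n+2)) : ℕ) ≠ 0 := fun hc => hne1 (Fin.ext hc)
      have hv2 : ((g.symm (j+1) : Fin (n+2)) : ℕ) ≠ 0 := fun hc => hne2 (Fin.ext hc)
      have hiff : (finRotate (n+2)).symm (g.symm (j+1)) < (finRotate (n+2)).symm (g.symm j)
          ↔ g.symm (j+1) < g.symm j := by
        rw [Fin.lt_def, Fin.lt_def, rotSymm_val hne1, rotSymm_val hne2]
        omega
      rw [hiff, ← mem_Dsf (e := g), hDg]
      have hjne_i : j ≠ i := fun hc => hj1 (by rw [hc, ← hs])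
      constructor
      · intro hmem
        exact Finset.mem_insert_of_mem (Finset.mem_erase.mpr ⟨hjne_i, hmem⟩)
      · intro hmem
        rcases Finset.mem_insert.mp hmem with hc | hc
        · exact absurd (hc.trans hs.symm) hj
        · exact (Finset.mem_erase.mp hc).2

def Tset (n p : ℕ) : Finset (ZMod (n+2)) := Finset.univ.filter fun i => (-i).val < p

lemma phi_inj : Function.Injective (fun i : ZMod (n+2) => (-i).val) := by
  intro a b h
  have h' : (-a).val = (-b).val := h
  have : (-a) = (-b) := by
    have h1 : (((-a).val : ℕ) : ZMod (n+2)) = -a := ZMod.natCast_zmod_val _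
    have h2 : (((-b).val : ℕ) : ZMod (n+2)) = -b := ZMod.natCast_zmod_val _
    rw [← h1, ← h2, h']
  exact neg_injective this

lemma phi_succ {i : ZMod (n+2)} (h : (-i).val ≠ 0) : (-(i+1)).val = (-i).val - 1 := by
  have h1 : -(i+1) = (-i) - 1 := by ring
  set x := -i with hx
  have hv : x.val < n+2 := ZMod.val_lt x
  have hv1 : 1 ≤ x.val := Nat.pos_of_ne_zero h
  have hcast : ((x.val - 1 : ℕ) : ZMod (n+2)) = x - 1 := by
    have hc : ((x.val : ℕ) : ZMod (n+2)) = x := ZMod.natCast_zmod_val x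
    rw [Nat.cast_sub hv1, hc, Nat.cast_one]
  rw [h1, ← hcast, ZMod.val_cast_of_lt (by omega)]

lemma gather_step (e : Fin (n+2) ≃ ZMod (n+2)) (hne : Dsf e ≠ Tset n (Dsf e).card) :
    ∃ h : Fin (n+2) ≃ ZMod (n+2), CircuitEquiv (n+2) ⇑e ⇑h ∧
      (Dsf h).card = (Dsf e).card ∧
      (∑ i ∈ Dsf h, (-i).val) + 1 = ∑ i ∈ Dsf e, (-i).val := by
  set p := (Dsf e).card with hp
  set Sl : Finset ℕ := (Dsf e).image (fun i => (-i).val) with hSl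
  have hSlcard : Sl.card = p := Finset.card_image_of_injective _ phi_inj
  have hjex : ∃ j, j < p ∧ j ∉ Sl := by
    by_contra hc
    push_neg at hc
    have hsub : Finset.range p ⊆ Sl := fun j hj => hc j (Finset.mem_range.mp hj)
    have hre : Finset.range p = Sl :=
      Finset.eq_of_subset_of_card_le hsub (by rw [hSlcard, Finset.card_range])
    apply hne
    ext i
    simp only [Tset, Finset.mem_filter, Finset.mem_univ, true_and]
    constructor
    · intro hi
      have hmem : (-i).val ∈ Sl := Finset.mem_image_of_mem _ hi
      rw [← hre] at hmem
      exact Finset.mem_range.mp hmem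
    · intro hi
      have hmem : (-i).val ∈ Sl := by
        rw [← hre]; exact Finset.mem_range.mpr hi
      obtain ⟨i', hi'D, hi'val⟩ := Finset.mem_image.mp hmem
      have : i' = i := phi_inj hi'val
      rwa [← this]
  obtain ⟨j, hjp, hjSl⟩ := hjex
  set Smin := Sl.filter (fun x => j < x) with hSmin
  have hSminne : Smin.Nonempty := by
    by_contra hc
    rw [Finset.not_nonempty_iff_eq_empty] at hc
    have hsub : Sl ⊆ (Finset.range (j+1)).erase j := by
      intro x hx
      rw [Finset.mem_erase, Finset.mem_range]
      have hxle : ¬ j < x := by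
        intro hgt
        have hxm : x ∈ Smin := Finset.mem_filter.mpr ⟨hx, hgt⟩
        rw [hc] at hxm
        exact absurd hxm (Finset.notMem_empty x)
      constructor
      · intro hcx; rw [hcx] at hx; exact hjSl hx
      · omega
    have hcle := Finset.card_le_card hsub
    rw [hSlcard, Finset.card_erase_of_mem (by rw [Finset.mem_range]; omega),
      Finset.card_range] at hcle
    omega
  set mv := Smin.min' hSminne with hmv
  have hmvmem : mv ∈ Smin := Finset.min'_mem _ _
  have hmvSl : mv ∈ Sl := (Finset.mem_filter.mp hmvmem).1
  have hmvgt : j < mv := (Finset.mem_filter.mp hmvmem).2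
  have hmv_min : ∀ x ∈ Sl, j < x → mv ≤ x :=
    fun x hx hjx => Finset.min'_le _ _ (Finset.mem_filter.mpr ⟨hx, hjx⟩)
  have hm1 : mv - 1 ∉ Sl := by
    intro hc
    rcases Nat.lt_or_ge j (mv - 1) with hgt | hle
    · have := hmv_min _ hc hgt; omega
    · have hcc : mv - 1 = j := by omega
      rw [hcc] at hc; exact hjSl hc
  obtain ⟨i, hiD, hival⟩ := Finset.mem_image.mp hmvSl
  have hmv1 : 1 ≤ mv := by omega
  have hphis : (-(i+1)).val = mv - 1 := by
    rw [phi_succ (by omega), hival]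
  have hi1 : i + 1 ∉ Dsf e := by
    intro hc
    apply hm1
    rw [← hphis]
    exact Finset.mem_image_of_mem _ hc
  obtain ⟨h, hceq, hDh⟩ := movePlus e hiD hi1
  have hi1e : i + 1 ∉ (Dsf e).erase i := fun hc => hi1 (Finset.mem_erase.mp hc).2
  refine ⟨h, hceq, ?_, ?_⟩
  · rw [hDh, Finset.card_insert_of_notMem hi1e, Finset.card_erase_of_mem hiD]
    have : 1 ≤ (Dsf e).card := Finset.card_pos.mpr ⟨i, hiD⟩
    omega
  · rw [hDh, Finset.sum_insert hi1e]
    have hsume := Finset.add_sum_erase (Dsf e) (fun x : ZMod (n+2) => (-x).val) hiD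
    rw [hphis]
    omega

lemma gather : ∀ (M : ℕ) (e : Fin (n+2) ≃ ZMod (n+2)),
    (∑ i ∈ Dsf e, (-i).val) ≤ M →
    ∃ g : Fin (n+2) ≃ ZMod (n+2), CircuitEquiv (n+2) ⇑e ⇑g ∧
      Dsf g = Tset n (Dsf e).card := by
  intro M
  induction M with
  | zero =>
    intro e hM
    by_cases hne : Dsf e = Tset n (Dsf e).card
    · exact ⟨e, ce_refl _, hne⟩
    · obtain ⟨h, _, _, hsum⟩ := gather_step e hne
      exfalso; omega
  | succ M ih =>
    intro e hM
    by_cases hne : Dsf e = Tset n (Dsf e).card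
    · exact ⟨e, ce_refl _, hne⟩
    · obtain ⟨h, hceq, hcard, hsum⟩ := gather_step e hne
      obtain ⟨g, hceq2, hDg⟩ := ih h (by omega)
      exact ⟨g, ce_trans hceq hceq2, by rw [hDg, hcard]⟩

/-! ### The double staircase -/

def Kfun (n p : ℕ) : ZMod (n+2) → Fin (n+2) := fun i =>
  ⟨if i.val = 0 then n + 2 - max p 1
    else if i.val ≤ n + 2 - p then i.val - 1
    else 2 * (n + 2) - p - i.val, by
      have := ZMod.val_lt i; split_ifs <;> omega⟩

lemma Kval {p : ℕ} (hp1 : 1 ≤ p) (i : ZMod (n+2)) : (Kfun n p i : ℕ) =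
    if i.val = 0 then n + 2 - p
    else if i.val ≤ n + 2 - p then i.val - 1
    else 2 * (n + 2) - p - i.val := by
  show (if i.val = 0 then n + 2 - max p 1
    else if i.val ≤ n + 2 - p then i.val - 1
    else 2 * (n + 2) - p - i.val) = _
  split_ifs <;> omega

lemma ds_K {p : ℕ} (hp1 : 1 ≤ p) (hp2 : p ≤ n + 1) (i : ZMod (n+2)) :
    doubleStaircase (n+2) p (Kfun n p i) = i := by
  have hvlt : i.val < n + 2 := ZMod.val_lt i
  have hkv := Kval (n := n) hp1 i
  by_cases h0 : i.val = 0
  · have hk : (Kfun n p i : ℕ) = n + 2 - p := by rw [hkv, if_pos h0]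
    rw [doubleStaircase, hk, if_neg (by omega)]
    have harg : 2 * (n+2) - p - (n+2-p) = n + 2 := by omega
    rw [harg, ZMod.natCast_self]
    exact ((ZMod.val_eq_zero i).mp h0).symm
  · by_cases h2 : i.val ≤ n + 2 - p
    · have hk : (Kfun n p i : ℕ) = i.val - 1 := by rw [hkv, if_neg h0, if_pos h2]
      rw [doubleStaircase, hk, if_pos (by omega)]
      have harg : i.val - 1 + 1 = i.val := by omega
      rw [harg, ZMod.natCast_zmod_val]
    · have hk : (Kfun n p i : ℕ) = 2*(n+2) - p - i.val := by rw [hkv, if_neg h0, if_neg h2]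
      rw [doubleStaircase, hk, if_neg (by omega)]
      have harg : 2*(n+2) - p - (2*(n+2) - p - i.val) = i.val := by omega
      rw [harg, ZMod.natCast_zmod_val]

lemma ds_bij {p : ℕ} (hp1 : 1 ≤ p) (hp2 : p ≤ n + 1) :
    Function.Bijective (doubleStaircase (n+2) p) := by
  have hsurj : Function.Surjective (doubleStaircase (n+2) p) :=
    fun i => ⟨Kfun n p i, ds_K hp1 hp2 i⟩
  exact (Fintype.bijective_iff_surjective_and_card _).mpr
    ⟨hsurj, by simp [ZMod.card]⟩

lemma dsE_symm {p : ℕ} (hp1 : 1 ≤ p) (hp2 : p ≤ n + 1) (i : ZMod (n+2)) :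
    (Equiv.ofBijective _ (ds_bij hp1 hp2)).symm i = Kfun n p i := by
  rw [Equiv.symm_apply_eq]
  exact (ds_K hp1 hp2 i).symm

lemma succ_val (i : ZMod (n+2)) : i + 1 = ((i.val + 1 : ℕ) : ZMod (n+2)) := by
  rw [Nat.cast_add, Nat.cast_one, ZMod.natCast_zmod_val]

lemma succ_val_of_lt {i : ZMod (n+2)} (h : i.val < n+1) : (i+1).val = i.val + 1 := by
  rw [succ_val, ZMod.val_cast_of_lt (by omega)]

lemma succ_of_top {i : ZMod (n+2)} (h : i.val = n+1) : i + 1 = 0 := by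
  rw [succ_val, h, show n+1+1 = n+2 from rfl, ZMod.natCast_self]

lemma Dsf_ds {p : ℕ} (hp1 : 1 ≤ p) (hp2 : p ≤ n + 1) :
    Dsf (Equiv.ofBijective _ (ds_bij hp1 hp2)) = Tset n p := by
  ext i
  rw [mem_Dsf, dsE_symm hp1 hp2, dsE_symm hp1 hp2]
  simp only [Tset, Finset.mem_filter, Finset.mem_univ, true_and]
  have hvlt : i.val < n+2 := ZMod.val_lt i
  have hneg : (-i).val = if i.val = 0 then 0 else n + 2 - i.val := by
    rw [ZMod.neg_val i]
    by_cases h : i = 0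
    · rw [if_pos h, if_pos ((ZMod.val_eq_zero i).mpr h)]
    · rw [if_neg h, if_neg (fun hc => h ((ZMod.val_eq_zero i).mp hc))]
  rw [hneg]
  rw [Fin.lt_def, Kval hp1, Kval hp1]
  by_cases hv : i.val = n + 1
  · rw [succ_of_top hv]
    simp only [ZMod.val_zero]
    split_ifs <;> first | contradiction | omega
  · rw [succ_val_of_lt (by omega)]
    split_ifs <;> first | contradiction | omega

lemma main (e : Fin (n+2) ≃ ZMod (n+2)) :
    ∃ p : ℕ, 1 ≤ p ∧ p ≤ n + 1 ∧ CircuitEquiv (n+2) ⇑e (doubleStaircase (n+2) p) := by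
  have hne : (Dsf e).Nonempty := by
    refine ⟨e (Fin.last (n+1)), ?_⟩
    rw [mem_Dsf_iff_not, Equiv.symm_apply_apply]
    exact not_lt.mpr (Fin.le_last _)
  have hnuniv : Dsf e ≠ Finset.univ := by
    intro hc
    have h0 : e 0 ∈ Dsf e := hc ▸ Finset.mem_univ _
    rw [mem_Dsf, Equiv.symm_apply_apply] at h0
    exact Fin.not_lt_zero _ h0
  set p := (Dsf e).card with hp
  have hp1 : 1 ≤ p := Finset.card_pos.mpr hne
  have hp2 : p ≤ n + 1 := by
    have hlt := Finset.card_lt_card (Finset.ssubset_univ_iff.mpr hnuniv)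
    rw [Finset.card_univ] at hlt
    have hcard : Fintype.card (ZMod (n+2)) = n + 2 := ZMod.card _
    omega
  obtain ⟨g, hceq, hDg⟩ := gather (∑ i ∈ Dsf e, (-i).val) e le_rfl
  have hso : sameOrient g (Equiv.ofBijective _ (ds_bij hp1 hp2)) :=
    sameOrient_of_Dsf_eq (by rw [hDg, Dsf_ds hp1 hp2])
  have hceq2 : CircuitEquiv (n+2) ⇑g ⇑(Equiv.ofBijective _ (ds_bij hp1 hp2)) :=
    lemA (invC g _) g _ le_rfl hso
  exact ⟨p, hp1, hp2, ce_trans hceq hceq2⟩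

end DSAux


/-- Every simple circuit on `N ≥ 2` sites is equivalent to the double
staircase circuit `F_p` for some `p ∈ {1, …, N−1}`. -/
theorem equivalent_to_doubleStaircase (N : ℕ) (hN : 2 ≤ N)
    (F : Fin N → ZMod N) (hF : IsSimpleCircuit N F) :
    ∃ p : ℕ, 1 ≤ p ∧ p ≤ N - 1 ∧ CircuitEquiv N F (doubleStaircase N p) := by
  obtain ⟨n, rfl⟩ : ∃ n, N = n + 2 := ⟨N - 2, by omega⟩
  have hF' : Function.Bijective F := hF
  obtain ⟨p, hp1, hp2, hceq⟩ := DSAux.main (Equiv.ofBijective F hF')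
  exact ⟨p, hp1, by omega, hceq⟩
end

section
/- The invariant C is unchanged by a cyclic shift: for every simple circuit (i_1, …, i_N) on N sites, C(i_1, i_2, …, i_N) = C(i_2, …, i_N, i_1). -/
/-- The invariant `C` is unchanged by a cyclic shift. -/
theorem Cinv_cyclic_shift (N : ℕ) (hN : 2 ≤ N)
    (F : Fin N → ZMod N) (hF : IsSimpleCircuit N F) :
    Cinv N F = Cinv N (F ∘ finRotate N) := by
  obtain ⟨n, rfl⟩ : ∃ n, N = n + 1 := ⟨N - 1, by omega⟩
  have hn : 1 ≤ n := by omega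
  haveI : Fact (1 < n + 1) := ⟨by omega⟩
  set e : Fin (n+1) ≃ ZMod (n+1) := Equiv.ofBijective F hF with he
  have heF : ∀ k, e k = F k := fun k => rfl
  set s : Fin (n+1) ≃ Fin (n+1) :=
    e.trans ((Equiv.addRight (1 : ZMod (n+1))).trans e.symm) with hs
  have hsval : ∀ l, F (s l) = F l + 1 := by
    intro l
    show F (e.symm (e l + 1)) = F l + 1
    rw [← heF, Equiv.apply_symm_apply, heF]
  have hkey : ∀ k l, F k = F l + 1 ↔ k = s l := by
    intro k l
    constructor
    · intro h
      have : e k = e (s l) := by rw [heF, heF, hsval, h]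
      exact e.injective this
    · rintro rfl; exact hsval l
  have hsne : ∀ l, s l ≠ l := by
    intro l h
    have h1 : F l = F l + 1 := by conv_lhs => rw [← h, hsval]
    have : (1 : ZMod (n+1)) = 0 := by
      have := left_eq_add.mp h1
      exact this
    exact one_ne_zero this
  set ρ : Fin (n+1) ≃ Fin (n+1) := finRotate (n+1) with hρ
  -- Cinv F = card of {l | s l < l}
  have hCF : Cinv (n+1) F = (Finset.univ.filter (fun l : Fin (n+1) => s l < l)).card := by
    unfold Cinv
    congr 1
    apply Finset.filter_congr
    intro l _
    constructor
    · rintro ⟨k, hkl, hk⟩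
      rwa [(hkey k l).mp hk] at hkl
    · intro h; exact ⟨s l, h, hsval l⟩
  have hCG : Cinv (n+1) (F ∘ ρ) =
      (Finset.univ.filter (fun l : Fin (n+1) => ρ.symm (s (ρ l)) < l)).card := by
    unfold Cinv
    congr 1
    apply Finset.filter_congr
    intro l _
    constructor
    · rintro ⟨k, hkl, hk⟩
      have : ρ k = s (ρ l) := (hkey (ρ k) (ρ l)).mp hk
      rw [← this, Equiv.symm_apply_apply]
      exact hkl
    · intro h
      refine ⟨ρ.symm (s (ρ l)), h, ?_⟩
      show F (ρ (ρ.symm (s (ρ l)))) = F (ρ l) + 1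
      rw [Equiv.apply_symm_apply]
      exact hsval (ρ l)
  -- reindex the G-set by ρ
  have hreindex : (Finset.univ.filter (fun l : Fin (n+1) => ρ.symm (s (ρ l)) < l)).card =
      (Finset.univ.filter (fun m : Fin (n+1) => ρ.symm (s m) < ρ.symm m)).card := by
    apply Finset.card_equiv ρ
    intro l
    simp only [Finset.mem_filter, Finset.mem_univ, true_and, Equiv.symm_apply_apply]
  rw [hCF, hCG, hreindex]
  -- facts about ρ.symm
  have hρ_apply : ∀ x : Fin (n+1), ρ x = x + 1 := fun x => finRotate_succ_apply x
  have hρsymm : ∀ x : Fin (n+1), ρ.symm x = x - 1 := by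
    intro x
    apply ρ.injective
    rw [Equiv.apply_symm_apply, hρ_apply, sub_add_cancel]
  have hρsymm_val : ∀ x : Fin (n+1), x ≠ 0 → (ρ.symm x).val = x.val - 1 := by
    intro x hx
    rw [hρsymm, Fin.coe_sub_one, if_neg hx]
  have hρsymm_zero : (ρ.symm 0).val = n := by
    rw [hρsymm, Fin.coe_sub_one, if_pos rfl]
  set m₀ : Fin (n+1) := s.symm 0 with hm₀
  have hsm₀ : s m₀ = 0 := s.apply_symm_apply 0
  have hm₀ne : m₀ ≠ 0 := by
    intro h
    exact hsne m₀ (by rw [hsm₀, h])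
  have hs0ne : s 0 ≠ 0 := hsne 0
  -- common-part equivalence
  have hcommon : ∀ m : Fin (n+1), m ≠ 0 → m ≠ m₀ →
      (ρ.symm (s m) < ρ.symm m ↔ s m < m) := by
    intro m hm hmm₀
    have hsm : s m ≠ 0 := by
      intro h
      exact hmm₀ (by rw [hm₀, ← h, Equiv.symm_apply_apply])
    rw [Fin.lt_def, Fin.lt_def, hρsymm_val _ hsm, hρsymm_val _ hm]
    have h1 : (s m).val ≠ 0 := fun h => hsm (Fin.ext h)
    have h2 : m.val ≠ 0 := fun h => hm (Fin.ext h)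
    omega
  apply Finset.card_bij' (fun m _ => Equiv.swap 0 m₀ m) (fun m _ => Equiv.swap 0 m₀ m)
  · intro m hm
    simp only [Finset.mem_filter, Finset.mem_univ, true_and] at hm ⊢
    by_cases h0 : m = 0
    · exfalso
      subst h0
      exact absurd hm (Fin.not_lt_zero _)
    · by_cases hm0 : m = m₀
      · subst hm0
        rw [Equiv.swap_apply_right]
        rw [Fin.lt_def, hρsymm_zero, hρsymm_val _ hs0ne]
        have : (s 0).val < n + 1 := (s 0).isLt
        have h1 : (s 0).val ≠ 0 := fun h => hs0ne (Fin.ext h)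
        omega
      · rw [Equiv.swap_apply_of_ne_of_ne h0 hm0]
        exact (hcommon m h0 hm0).mpr hm
  · intro m hm
    simp only [Finset.mem_filter, Finset.mem_univ, true_and] at hm ⊢
    by_cases h0 : m = 0
    · subst h0
      rw [Equiv.swap_apply_left, hsm₀]
      exact Fin.pos_of_ne_zero hm₀ne
    · by_cases hm0 : m = m₀
      · exfalso
        subst hm0
        rw [hsm₀] at hm
        have : (ρ.symm (0 : Fin (n+1))).val < (ρ.symm m₀).val := Fin.lt_def.mp hm
        rw [hρsymm_zero, hρsymm_val _ hm₀ne] at this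
        omega
      · rw [Equiv.swap_apply_of_ne_of_ne h0 hm0]
        exact (hcommon m h0 hm0).mp hm
  · intro m _; exact Equiv.swap_apply_self _ _ _
  · intro m _; exact Equiv.swap_apply_self _ _ _
end

section
/- The invariant C is unchanged by swapping time-adjacent commuting gates: if (i_1, …, i_N) is a simple circuit on N sites and i_k − i_{k+1} ≢ −1, 0, 1 (mod N) for some k ∈ {1, …, N−1}, then C(i_1, …, i_k, i_{k+1}, …, i_N) = C(i_1, …, i_{k+1}, i_k, …, i_N). -/
/-- The invariant `C` is unchanged by swapping time-adjacent commuting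
gates. -/
theorem Cinv_swap (N : ℕ) (hN : 2 ≤ N)
    (F : Fin N → ZMod N) (hF : IsSimpleCircuit N F)
    (k : ℕ) (h : k + 1 < N)
    (hm1 : F ⟨k, Nat.lt_of_succ_lt h⟩ - F ⟨k + 1, h⟩ ≠ -1)
    (h0 : F ⟨k, Nat.lt_of_succ_lt h⟩ - F ⟨k + 1, h⟩ ≠ 0)
    (hp1 : F ⟨k, Nat.lt_of_succ_lt h⟩ - F ⟨k + 1, h⟩ ≠ 1) :

    Cinv N F = Cinv N (F ∘ Equiv.swap ⟨k, Nat.lt_of_succ_lt h⟩ ⟨k + 1, h⟩) := by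
  set a : Fin N := ⟨k, Nat.lt_of_succ_lt h⟩ with ha
  set b : Fin N := ⟨k + 1, h⟩ with hb
  set e := Equiv.swap a b with he
  have hab : a < b := by simp [ha, hb, Fin.lt_def]
  have key : ∀ l : Fin N,
      (∃ m, m < l ∧ F (e m) = F (e l) + 1) ↔ (∃ m, m < e l ∧ F m = F (e l) + 1) := by
    intro l
    by_cases hla : l = a
    · subst hla
      rw [show e a = b from Equiv.swap_apply_left a b]
      constructor
      · rintro ⟨m, hm, hFm⟩
        have hmne : e m = m := by
          apply Equiv.swap_apply_of_ne_of_ne (ne_of_lt hm) (ne_of_lt (lt_trans hm hab))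
        exact ⟨m, lt_trans hm hab, by rwa [hmne] at hFm⟩
      · rintro ⟨m, hm, hFm⟩
        have hmb : m.val < k + 1 := hm
        have hmne : m ≠ a := by
          intro hma
          subst hma
          apply hp1
          rw [hFm]; ring
        have hmlt : m < a := by
          rw [Fin.lt_def]
          show m.val < k
          have h1 : m.val ≠ k := fun hh => hmne (Fin.ext hh)
          omega
        have hem : e m = m :=
          Equiv.swap_apply_of_ne_of_ne hmne (ne_of_lt (lt_trans hmlt hab))
        exact ⟨m, hmlt, by rwa [hem]⟩
    · by_cases hlb : l = b
      · subst hlb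
        rw [show e b = a from Equiv.swap_apply_right a b]
        constructor
        · rintro ⟨m, hm, hFm⟩
          have hmb : m.val < k + 1 := hm
          by_cases hma : m = a
          · subst hma
            rw [show e a = b from Equiv.swap_apply_left a b] at hFm
            exfalso; apply hm1; rw [hFm]; ring
          · have hmlt : m < a := by
              rw [Fin.lt_def]
              show m.val < k
              have h1 : m.val ≠ k := fun hh => hma (Fin.ext hh)
              omega
            have hem : e m = m :=
              Equiv.swap_apply_of_ne_of_ne hma (ne_of_lt (lt_trans hmlt hab))
            exact ⟨m, hmlt, by rwa [hem] at hFm⟩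
        · rintro ⟨m, hm, hFm⟩
          have hem : e m = m :=
            Equiv.swap_apply_of_ne_of_ne (ne_of_lt hm) (ne_of_lt (lt_trans hm hab))
          exact ⟨m, lt_trans hm hab, by rwa [hem]⟩
      · have hel : e l = l := Equiv.swap_apply_of_ne_of_ne hla hlb
        rw [hel]
        have hlv : l.val < k ∨ k + 1 < l.val := by
          have h1 : l.val ≠ k := fun hh => hla (Fin.ext hh)
          have h2 : l.val ≠ k + 1 := fun hh => hlb (Fin.ext hh)
          omega
        have hlt : ∀ m : Fin N, e m < l ↔ m < l := by
          intro m
          by_cases hma : m = a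
          · subst hma
            rw [show e a = b from Equiv.swap_apply_left a b]
            simp only [Fin.lt_def, ha, hb]
            omega
          · by_cases hmb : m = b
            · subst hmb
              rw [show e b = a from Equiv.swap_apply_right a b]
              simp only [Fin.lt_def, ha, hb]
              omega
            · rw [Equiv.swap_apply_of_ne_of_ne hma hmb]
        constructor
        · rintro ⟨m, hm, hFm⟩
          exact ⟨e m, (hlt m).mpr hm, hFm⟩
        · rintro ⟨m, hm, hFm⟩
          refine ⟨e m, (hlt m).mpr hm, ?_⟩
          rw [show e (e m) = m from Equiv.swap_apply_self a b m]
          exact hFm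
  unfold Cinv
  have hset : (Finset.univ.filter
        (fun l : Fin N => ∃ m : Fin N, m < l ∧ (F ∘ e) m = (F ∘ e) l + 1))
      = (Finset.univ.filter
        (fun l : Fin N => ∃ m : Fin N, m < l ∧ F m = F l + 1)).map e.symm.toEmbedding := by
    ext l
    simp only [Finset.mem_filter, Finset.mem_map, Finset.mem_univ, true_and,
      Equiv.coe_toEmbedding]
    constructor
    · intro hl
      exact ⟨e l, (key l).mp hl, e.symm_apply_apply l⟩
    · rintro ⟨x, hx, hxl⟩
      have : e l = x := by rw [← hxl]; exact (e.apply_symm_apply x)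
      show ∃ m, m < l ∧ F (e m) = F (e l) + 1
      rw [key l, this]
      exact hx
  rw [hset, Finset.card_map]
end

section
/- For every p ∈ {1, …, N−1}, the double-staircase circuit F_p satisfies C(F_p) = p. -/
/-- For every `p ∈ {1, …, N−1}`, the double staircase circuit `F_p`
satisfies `C(F_p) = p`. -/
theorem Cinv_doubleStaircase (N p : ℕ) (hN : 2 ≤ N) (hp1 : 1 ≤ p) (hp : p ≤ N - 1) :
    Cinv N (doubleStaircase N p) = p := by
  classical
  haveI : NeZero N := ⟨by omega⟩
  have hNp : N - p < N := by omega
  have key : ∀ l : Fin N,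
      (∃ k : Fin N, k < l ∧ doubleStaircase N p k = doubleStaircase N p l + 1) ↔
      (⟨N - p, hNp⟩ : Fin N) ≤ l := by
    intro l
    constructor
    · rintro ⟨k, hk, heq⟩
      rw [Fin.le_def]
      by_contra hlt
      push_neg at hlt
      simp only [Fin.lt_def] at hk hlt
      rw [doubleStaircase, doubleStaircase, if_pos (by omega), if_pos hlt] at heq
      have h3 : ((k.val + 1 : ℕ) : ZMod N) = ((l.val + 2 : ℕ) : ZMod N) := by
        push_cast at heq ⊢; linear_combination heq
      have h2 := congrArg ZMod.val h3
      rw [ZMod.val_natCast, ZMod.val_natCast, Nat.mod_eq_of_lt (by omega)] at h2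
      rcases Nat.lt_or_ge (l.val + 2) N with h | h
      · rw [Nat.mod_eq_of_lt h] at h2; omega
      · have hl2 : l.val + 2 = N := by omega
        rw [hl2, Nat.mod_self] at h2; omega
    · intro hle
      rw [Fin.le_def] at hle
      simp only [Fin.val_mk] at hle
      rcases eq_or_lt_of_le hle with heq | hlt
    
      · refine ⟨⟨0, by omega⟩, ?_, ?_⟩
        · simp only [Fin.lt_def]; omega
        · rw [doubleStaircase, doubleStaircase]
          simp only [Fin.val_mk]
          rw [if_pos (by omega), if_neg (by omega)]
          have h4 : 2 * N - p - l.val = N := by omega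
          rw [h4]
          simp
      · refine ⟨⟨l.val - 1, by omega⟩, ?_, ?_⟩
        · simp only [Fin.lt_def]; omega
        · rw [doubleStaircase, doubleStaircase]
          simp only [Fin.val_mk]
          rw [if_neg (by omega), if_neg (by omega)]
          have h5 : 2 * N - p - (l.val - 1) = (2 * N - p - l.val) + 1 := by omega
          rw [h5]
          push_cast
          ring
  rw [Cinv, Finset.filter_congr (fun l _ => key l)]
  have : Finset.univ.filter (fun l : Fin N => (⟨N - p, hNp⟩ : Fin N) ≤ l)
      = Finset.Ici (⟨N - p, hNp⟩ : Fin N) := by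
    ext x; simp
  rw [this, Fin.card_Ici]
  simp only [Fin.val_mk]
  omega
end

section
/- For every (q,r) ∈ Q_N, the canonical circuit F_{q,r} is a simple circuit; equivalently, the map sending the pair (j,i) with 0 ≤ j ≤ q−1 and 0 ≤ i ≤ N/q − 1 to the residue 1 + j·r + i·q modulo N is a bijection onto ℤ/Nℤ. -/
lemma keyInj (N q r : ℕ) (hN : 2 ≤ N) (hq2 : 2 ≤ q) (hdvd : q ∣ N)
    (hgcd : Nat.gcd q r = 1) :
    ∀ j₁ i₁ j₂ i₂ : ℕ, j₁ < q → j₂ < q → i₁ < N / q → i₂ < N / q →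
      ((1 + j₁ * r + i₁ * q : ℕ) : ZMod N) = ((1 + j₂ * r + i₂ * q : ℕ) : ZMod N) →
      j₁ = j₂ ∧ i₁ = i₂ := by
  intro j₁ i₁ j₂ i₂ hj₁ hj₂ hi₁ hi₂ heq
  set m := N / q with hm
  have hNqm : N = q * m := (Nat.div_mul_cancel hdvd).symm.trans (Nat.mul_comm _ _)
  have hq0 : 0 < q := by omega
  have hmod : (1 + j₁ * r + i₁ * q) ≡ (1 + j₂ * r + i₂ * q) [MOD N] :=
    (ZMod.natCast_eq_natCast_iff _ _ _).mp heq
  have hint : (N : ℤ) ∣ ((1 + j₂ * r + i₂ * q : ℕ) : ℤ) - ((1 + j₁ * r + i₁ * q : ℕ) : ℤ) :=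
    (Nat.modEq_iff_dvd).mp hmod
  have hint' : (N : ℤ) ∣ ((j₂ : ℤ) - j₁) * r + ((i₂ : ℤ) - i₁) * q := by
    convert hint using 1; push_cast; ring
  have hqN : (q : ℤ) ∣ (N : ℤ) := Int.natCast_dvd_natCast.mpr hdvd
  have hq1 : (q : ℤ) ∣ ((j₂ : ℤ) - j₁) * r := by
    have : (q : ℤ) ∣ ((j₂ : ℤ) - j₁) * r + ((i₂ : ℤ) - i₁) * q := hqN.trans hint'
    have h2 : (q : ℤ) ∣ ((i₂ : ℤ) - i₁) * q := dvd_mul_left _ _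
    exact (dvd_add_left h2).mp this
  have hcop : IsCoprime (q : ℤ) (r : ℤ) := by
    rw [Int.isCoprime_iff_gcd_eq_one]
    simpa using hgcd
  have hqj : (q : ℤ) ∣ ((j₂ : ℤ) - j₁) := hcop.dvd_of_dvd_mul_right hq1
  have hjeq : j₁ = j₂ := by
    have := Int.eq_zero_of_abs_lt_dvd hqj (by
      rw [abs_lt]; constructor <;> [skip; skip] <;> push_cast <;> omega)
    omega
  refine ⟨hjeq, ?_⟩
  subst hjeq
  have hNi : (N : ℤ) ∣ ((i₂ : ℤ) - i₁) * q := by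
    have := hint'; simpa using this
  have hmi : (m : ℤ) ∣ ((i₂ : ℤ) - i₁) := by
    rcases hNi with ⟨c, hc⟩
    refine ⟨c, ?_⟩
    have hqz : (q : ℤ) ≠ 0 := by exact_mod_cast hq0.ne'
    have : ((i₂ : ℤ) - i₁) * q = (m * c) * q := by
      rw [hc, hNqm]; push_cast; ring
    exact mul_right_cancel₀ hqz this
  have := Int.eq_zero_of_abs_lt_dvd hmi (by
    rw [abs_lt]; constructor <;> push_cast <;> omega)
  omega

/-- For every `(q,r) ∈ Q_N`, the canonical circuit `F_{q,r}` is a simple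
circuit; equivalently, `(j,i) ↦ 1 + j·r + i·q (mod N)` is a bijection onto `ZMod N`. -/
theorem canonicalCircuit_simple (N : ℕ) (hN : 2 ≤ N)
    (q r : ℕ) (hqr : (q, r) ∈ QN N) :
    IsSimpleCircuit N (canonicalCircuit N q r) ∧
    Function.Bijective
      (fun ji : Fin q × Fin (N / q) => ((1 + ji.1.val * r + ji.2.val * q : ℕ) : ZMod N)) := by
  obtain ⟨hq2, hqN, hdvd, hr1, hrq, hgcd⟩ := hqr
  have hq0 : 0 < q := by omega
  have hm0 : 0 < N / q := Nat.div_pos hqN hq0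
  have hNqm : N = q * (N / q) := (Nat.div_mul_cancel hdvd).symm.trans (Nat.mul_comm _ _)
  have key := keyInj N q r hN hq2 hdvd hgcd
  haveI : NeZero N := ⟨by omega⟩
  have hcard : Fintype.card (ZMod N) = N := ZMod.card N
  constructor
  · rw [IsSimpleCircuit, Fintype.bijective_iff_injective_and_card]
    refine ⟨?_, by simp [hcard]⟩
    intro l₁ l₂ h
    have h1 : l₁.val / (N / q) < q := (Nat.div_lt_iff_lt_mul hm0).mpr
      (by rw [Nat.mul_div_cancel' hdvd]; exact l₁.isLt)
    have h2 : l₂.val / (N / q) < q := (Nat.div_lt_iff_lt_mul hm0).mpr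
      (by rw [Nat.mul_div_cancel' hdvd]; exact l₂.isLt)
    have h3 := Nat.mod_lt l₁.val hm0
    have h4 := Nat.mod_lt l₂.val hm0
    obtain ⟨hj, hi⟩ := key _ _ _ _ h1 h2 h3 h4 h
    have e1 := Nat.div_add_mod l₁.val (N / q)
    have e2 := Nat.div_add_mod l₂.val (N / q)
    exact Fin.ext (by rw [← e1, ← e2, hj, hi])
  · rw [Fintype.bijective_iff_injective_and_card]
    refine ⟨?_, by simp [hcard, Nat.mul_div_cancel' hdvd]⟩
    rintro ⟨j₁, i₁⟩ ⟨j₂, i₂⟩ h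
    obtain ⟨hj, hi⟩ := key _ _ _ _ j₁.isLt j₂.isLt i₁.isLt i₂.isLt h
    simp [Prod.ext_iff, Fin.ext_iff, hj, hi]
end

section
/- Let N ≥ 2 and let r satisfy 1 ≤ r < N and gcd(r,N) = 1, and consider the generalized staircase circuit F_{N,r} (the sequence whose l-th entry is the residue 1 + (l−1)·r mod N). Then C(F_{N,r}) = N − k_N + 1, where k_N ∈ {1, …, N} is the unique time index whose entry is the residue 0 (i.e., 1 + (k_N − 1)·r ≡ 0 mod N). Moreover C(F_{N,r}) equals 1 plus the number of gates appearing after gate 0 in the sequence. -/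

lemma card_filter_le_aux (N a : ℕ) :
    (Finset.univ.filter (fun l : Fin N => a ≤ l.val)).card = N - a := by
  rcases lt_or_ge a N with h | h
  · have : (Finset.univ.filter (fun l : Fin N => a ≤ l.val)) = Finset.Ici ⟨a, h⟩ := by
      ext l
      simp [Fin.le_def]
    rw [this, Fin.card_Ici]
  · have : (Finset.univ.filter (fun l : Fin N => a ≤ l.val)) = ∅ := by
      ext l
      simp only [Finset.mem_filter, Finset.mem_univ, true_and, Finset.notMem_empty, iff_false]
      omega
    rw [this]
    simp
    omega

theorem Cinv_staircase_eq' (N r : ℕ) (hN : 2 ≤ N) (hr1 : 1 ≤ r) (hrN : r < N)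
    (hgcd : Nat.gcd r N = 1)
    (kN : ℕ) (hk1 : 1 ≤ kN) (hkN : kN ≤ N)
    (hk : ((1 + (kN - 1) * r : ℕ) : ZMod N) = 0) :
    (Finset.univ.filter (fun l : Fin N => ∃ k : Fin N, k < l ∧
      ((1 + k.val * r : ℕ) : ZMod N) = ((1 + l.val * r : ℕ) : ZMod N) + 1)).card
      = N - kN + 1 := by
  haveI : Fact (1 < N) := ⟨hN⟩
  haveI : NeZero N := ⟨by omega⟩
  -- kN ≥ 2
  have hkN2 : 2 ≤ kN := by
    by_contra h
    have : kN = 1 := by omega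
    rw [this] at hk
    simp at hk
  set m := kN - 1 with hm
  have hm1 : 1 ≤ m := by omega
  have hmN : m < N := by omega
  set s := N - m with hs
  have hs1 : 1 ≤ s := by omega
  have hsN : s < N := by omega
  -- (m*r : ZMod N) = -1
  have hN0 : ((N : ℕ) : ZMod N) = 0 := ZMod.natCast_self N
  have hmr : ((m * r : ℕ) : ZMod N) = -1 := by
    have := hk
    push_cast at this ⊢
    linear_combination this
  have hsr : ((s * r : ℕ) : ZMod N) = 1 := by
    have hle : m * r ≤ N * r := Nat.mul_le_mul_right r (by omega)
    have : s * r = N * r - m * r := by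
      rw [hs, Nat.sub_mul]
    rw [this, Nat.cast_sub hle, hmr]
    push_cast
    linear_combination (r : ZMod N) * hN0
  have hru : IsUnit ((r : ℕ) : ZMod N) := (ZMod.isUnit_iff_coprime r N).mpr hgcd
  -- main iff
  have key : ∀ l : Fin N, (∃ k : Fin N, k < l ∧
      ((1 + k.val * r : ℕ) : ZMod N) = ((1 + l.val * r : ℕ) : ZMod N) + 1) ↔ m ≤ l.val := by
    intro l
    constructor
    · rintro ⟨k, hkl, heq⟩
      by_contra hlt
      push_neg at hlt
      -- l.val + s < N
      have hlsN : l.val + s < N := by omega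
      -- k.val = l.val + s
      have hsr' : ((s : ℕ) : ZMod N) * r = 1 := by
        have := hsr; push_cast at this; exact this
      have h1 : ((k.val : ℕ) : ZMod N) * r = (((l.val + s : ℕ) : ZMod N)) * r := by
        push_cast at heq ⊢
        linear_combination heq - hsr'
      have h2 : ((k.val : ℕ) : ZMod N) = ((l.val + s : ℕ) : ZMod N) :=
        hru.mul_right_cancel h1
      have h3 : k.val = l.val + s := by
        have := congrArg ZMod.val h2
        rwa [ZMod.val_natCast_of_lt k.isLt, ZMod.val_natCast_of_lt hlsN] at this
      have := hkl
      rw [Fin.lt_def] at this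
      omega
    · intro hml
      have hls : N ≤ l.val + s := by omega
      refine ⟨⟨l.val + s - N, by omega⟩, by rw [Fin.lt_def]; simp; omega, ?_⟩
      have hcast : ((l.val + s - N) * r : ℕ) = (l.val + s) * r - N * r := by
        rw [Nat.sub_mul]
      have hle : N * r ≤ (l.val + s) * r := Nat.mul_le_mul_right r hls
      show ((1 + (l.val + s - N) * r : ℕ) : ZMod N) = _
      rw [Nat.cast_add, hcast, Nat.cast_sub hle]
      have hsr' : ((s : ℕ) : ZMod N) * r = 1 := by
        have := hsr; push_cast at this; exact this
      push_cast
      linear_combination hsr' - (r : ZMod N) * hN0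
  have hfe : (Finset.univ.filter (fun l : Fin N => ∃ k : Fin N, k < l ∧
      ((1 + k.val * r : ℕ) : ZMod N) = ((1 + l.val * r : ℕ) : ZMod N) + 1))
      = Finset.univ.filter (fun l : Fin N => m ≤ l.val) := by
    apply Finset.filter_congr
    intro l _
    exact key l
  rw [hfe, card_filter_le_aux]
  omega


/-- For the generalized staircase circuit `F_{N,r}`, if `k_N` is the
(1-indexed) time index whose entry is the residue `0`, then `C(F_{N,r}) = N − k_N + 1`;
moreover `C(F_{N,r})` is `1` plus the number of gates appearing after gate `0`. -/
theorem Cinv_staircase_eq (N r : ℕ) (hN : 2 ≤ N) (hr1 : 1 ≤ r) (hrN : r < N)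
    (hgcd : Nat.gcd r N = 1)
    (kN : ℕ) (hk1 : 1 ≤ kN) (hkN : kN ≤ N)
    (hk : ((1 + (kN - 1) * r : ℕ) : ZMod N) = 0) :
    Cinv N (staircase N r) = N - kN + 1 ∧
    Cinv N (staircase N r) =
      1 + (Finset.univ.filter (fun l : Fin N => kN < l.val + 1)).card := by
  have h1 : Cinv N (staircase N r) = N - kN + 1 :=
    Cinv_staircase_eq' N r hN hr1 hrN hgcd kN hk1 hkN hk
  refine ⟨h1, ?_⟩
  have h2 : (Finset.univ.filter (fun l : Fin N => kN < l.val + 1))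
      = Finset.univ.filter (fun l : Fin N => kN ≤ l.val) := by
    apply Finset.filter_congr
    intro l _
    constructor <;> (intro; omega)
  rw [h1, h2, card_filter_le_aux]
  omega
end

section
/- Let N ≥ 2 and let r satisfy 1 ≤ r < N and gcd(r,N) = 1. Then r · C(F_{N,r}) ≡ 1 (mod N); that is, C(F_{N,r}) is the representative in {1, …, N−1} of the modular multiplicative inverse of r modulo N. In particular gcd(C(F_{N,r}), N) = 1. -/
/-- `r · C(F_{N,r}) ≡ 1 (mod N)`: the invariant `C(F_{N,r})` is the
representative in `{1, …, N−1}` of the modular inverse of `r` mod `N`; in particular it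
is coprime with `N`. -/
theorem Cinv_staircase_inverse (N r : ℕ) (hN : 2 ≤ N) (hr1 : 1 ≤ r) (hrN : r < N)
    (hgcd : Nat.gcd r N = 1) :
    r * Cinv N (staircase N r) ≡ 1 [MOD N] ∧
    1 ≤ Cinv N (staircase N r) ∧ Cinv N (staircase N r) ≤ N - 1 ∧
    Nat.gcd (Cinv N (staircase N r)) N = 1 := by
  haveI : NeZero N := ⟨by omega⟩
  haveI : Fact (1 < N) := ⟨by omega⟩
  set u : ZMod N := (r : ZMod N)⁻¹ with hu
  have hru : (r : ZMod N) * u = 1 := ZMod.coe_mul_inv_eq_one r hgcd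
  set s : ℕ := u.val with hsdef
  have hsu : (s : ZMod N) = u := by simp [hsdef, ZMod.natCast_val, ZMod.cast_id]
  have hsN : s < N := ZMod.val_lt u
  have hs0 : s ≠ 0 := by
    intro h
    have hu0 : u = 0 := by rwa [← ZMod.val_eq_zero]
    rw [hu0, mul_zero] at hru
    exact one_ne_zero hru.symm
  have hsr : (s : ZMod N) * r = 1 := by rw [hsu, mul_comm]; exact hru
  have hmod : r * s ≡ 1 [MOD N] := by
    have h1 : ((r * s : ℕ) : ZMod N) = ((1 : ℕ) : ZMod N) := by
      push_cast
      rw [mul_comm]; exact hsr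
    exact (ZMod.natCast_eq_natCast_iff _ _ _).mp h1
  have key : ∀ l : Fin N,
      (∃ k : Fin N, k < l ∧ staircase N r k = staircase N r l + 1) ↔ N - s ≤ l.val := by
    intro l
    constructor
    · rintro ⟨k, hkl, hk⟩
      by_contra h
      push_neg at h
      simp only [staircase] at hk
      push_cast at hk
      have h2 : (k.val : ZMod N) * r = (l.val : ZMod N) * r + 1 := by linear_combination hk
      have h3 : ((k.val : ℕ) : ZMod N) = ((l.val + s : ℕ) : ZMod N) := by
        push_cast
        rw [hsu]
        calc (k.val : ZMod N) = (k.val : ZMod N) * ((r : ZMod N) * u) := by rw [hru, mul_one]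
          _ = ((k.val : ZMod N) * r) * u := by ring
          _ = ((l.val : ZMod N) * r + 1) * u := by rw [h2]
          _ = (l.val : ZMod N) * ((r : ZMod N) * u) + u := by ring
          _ = (l.val : ZMod N) + u := by rw [hru, mul_one]
      have h4 : k.val % N = (l.val + s) % N := (ZMod.natCast_eq_natCast_iff _ _ _).mp h3
      rw [Nat.mod_eq_of_lt k.isLt, Nat.mod_eq_of_lt (by omega)] at h4
      have hkl' : k.val < l.val := hkl
      omega
    · intro h
      have hl : l.val < N := l.isLt
      refine ⟨⟨l.val + s - N, by omega⟩, by
        show l.val + s - N < l.val; omega, ?_⟩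
      simp only [staircase]
      have hcast : ((l.val + s - N : ℕ) : ZMod N) = (l.val : ZMod N) + s := by
        have he : l.val + s - N + N = l.val + s := by omega
        calc ((l.val + s - N : ℕ) : ZMod N)
            = ((l.val + s - N : ℕ) : ZMod N) + ((N : ℕ) : ZMod N) := by
              rw [ZMod.natCast_self, add_zero]
          _ = (((l.val + s - N) + N : ℕ) : ZMod N) := by push_cast; ring
          _ = ((l.val + s : ℕ) : ZMod N) := by rw [he]
          _ = (l.val : ZMod N) + s := by push_cast; ring
      push_cast
      rw [hcast]
      linear_combination hsr
  have hC : Cinv N (staircase N r) = s := by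
    unfold Cinv
    rw [Finset.filter_congr (fun l _ => key l)]
    rw [show s = (Finset.range s).card from (Finset.card_range s).symm]
    apply Finset.card_bij' (fun l _ => l.val - (N - s)) (fun i hi => ⟨N - s + i, by
        simp only [Finset.mem_range] at hi; omega⟩) <;>
      (intro a ha;
       simp only [Finset.mem_filter, Finset.mem_range, Finset.mem_univ, Finset.card_range,
         true_and] at ha ⊢) <;>
      first
        | omega
        | (apply Fin.ext; simp; omega)
  have hunit : IsUnit ((s : ℕ) : ZMod N) := by
    rw [hsu]
    exact IsUnit.of_mul_eq_one (a := u) (r : ZMod N) (by rw [← hru]; ring)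
  refine ⟨by rw [hC]; exact hmod, by omega, by omega, ?_⟩
  rw [hC]
  exact (ZMod.isUnit_iff_coprime s N).mp hunit
end

section
/- For N ≥ 2, the map r ↦ C(F_{N,r}) is a bijection from the set {r : 1 ≤ r < N, gcd(r,N) = 1} onto the set {p : 1 ≤ p < N, gcd(p,N) = 1}. In particular, C(F_{N,r}) takes different values for different admissible r, and every integer less than N and coprime to N is attained. -/
lemma cinv_staircase_eq (N : ℕ) (hN : 2 ≤ N) (r : ℕ) (hr1 : 1 ≤ r) (hrN : r < N)
    (hgcd : Nat.gcd r N = 1) :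
    Cinv N (staircase N r) = ((r : ZMod N)⁻¹).val := by
  haveI : NeZero N := ⟨by omega⟩
  haveI : Fact (1 < N) := ⟨by omega⟩
  set s := ((r : ZMod N)⁻¹).val with hs
  have hcop : Nat.Coprime r N := hgcd
  have hu : (r : ZMod N) * (r : ZMod N)⁻¹ = 1 := ZMod.coe_mul_inv_eq_one r hcop
  have hsN : s < N := ZMod.val_lt _
  have hscast : ((s : ℕ) : ZMod N) = (r : ZMod N)⁻¹ := by
    rw [hs, ZMod.natCast_val, ZMod.cast_id]
  have hs1 : 1 ≤ s := by
    rcases Nat.eq_zero_or_pos s with h0 | h; swap; · exact h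
    exfalso
    have : (r : ZMod N)⁻¹ = 0 := by rw [← hscast, h0]; simp
    rw [this, mul_zero] at hu
    exact one_ne_zero hu.symm
  have key : ∀ l : Fin N,
      (∃ k : Fin N, k < l ∧ staircase N r k = staircase N r l + 1) ↔ N ≤ l.val + s := by
    intro l
    constructor
    · rintro ⟨k, hkl, heq⟩
      unfold staircase at heq
      push_cast at heq
      have hkr : (k.val : ZMod N) * r = (l.val : ZMod N) * r + 1 := by
        linear_combination heq
      have hkey : (k.val : ZMod N) = (l.val : ZMod N) + (r : ZMod N)⁻¹ := by
        have := congrArg (· * (r : ZMod N)⁻¹) hkr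
        simp only [add_mul, mul_assoc, hu, mul_one, one_mul] at this
        exact this
      have hval := congrArg ZMod.val hkey
      rw [ZMod.val_add, ZMod.val_natCast, ZMod.val_natCast, Nat.mod_eq_of_lt k.isLt,
        Nat.mod_eq_of_lt l.isLt] at hval
      have hkl' : k.val < l.val := hkl
      by_contra hcon
      push_neg at hcon
      rw [Nat.mod_eq_of_lt hcon] at hval
      omega
    · intro h
      have hl : l.val < N := l.isLt
      refine ⟨⟨l.val + s - N, by omega⟩, by
        show l.val + s - N < l.val; omega, ?_⟩
      unfold staircase
      push_cast
      have hc : ((l.val + s - N : ℕ) : ZMod N) = (l.val : ZMod N) + (r : ZMod N)⁻¹ := by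
        have : ((l.val + s - N : ℕ) : ZMod N) = ((l.val + s : ℕ) : ZMod N) - (N : ZMod N) := by
          rw [← Nat.cast_sub h]
        rw [this, ZMod.natCast_self, sub_zero]
        push_cast
        rw [hscast]
      rw [hc, add_mul]
      have : (r : ZMod N)⁻¹ * (r : ZMod N) = 1 := by rw [mul_comm]; exact hu
      rw [this]
      ring
  unfold Cinv
  have hset : Finset.univ.filter (fun l : Fin N =>
      ∃ k : Fin N, k < l ∧ staircase N r k = staircase N r l + 1)
      = Finset.univ.filter (fun l : Fin N => N ≤ l.val + s) := by
    apply Finset.filter_congr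
    intro l _
    simp [key l]
  rw [hset]
  have : (Finset.univ.filter (fun l : Fin N => N ≤ l.val + s)).card
      = (Finset.Ico (N - s) N).card := by
    refine Finset.card_bij' (fun l _ => l.val) (fun b hb => ⟨b, (Finset.mem_Ico.mp hb).2⟩)
      ?_ ?_ ?_ ?_
    · intro a ha
      simp only [Finset.mem_filter, Finset.mem_univ, true_and] at ha
      simp only [Finset.mem_Ico]
      exact ⟨by omega, a.isLt⟩
    · intro b hb
      simp only [Finset.mem_Ico] at hb
      simp only [Finset.mem_filter, Finset.mem_univ, true_and]
      omega
    · intro a _; rfl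
    · intro b _; rfl
  rw [this, Nat.card_Ico]
  omega

/-- The map `r ↦ C(F_{N,r})` is a bijection from
`{r : 1 ≤ r < N, gcd(r,N) = 1}` onto `{p : 1 ≤ p < N, gcd(p,N) = 1}`. -/
theorem Cinv_staircase_bijOn (N : ℕ) (hN : 2 ≤ N) :
    Set.BijOn (fun r => Cinv N (staircase N r))
      {r : ℕ | 1 ≤ r ∧ r < N ∧ Nat.gcd r N = 1}
      {p : ℕ | 1 ≤ p ∧ p < N ∧ Nat.gcd p N = 1} := by
  haveI : NeZero N := ⟨by omega⟩
  haveI : Fact (1 < N) := ⟨by omega⟩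
  set S := {r : ℕ | 1 ≤ r ∧ r < N ∧ Nat.gcd r N = 1} with hS
  set g : ℕ → ℕ := fun r => ((r : ZMod N)⁻¹).val with hg
  -- g maps S to S and is an involution on S
  have hmem : ∀ r ∈ S, g r ∈ S ∧ g (g r) = r := by
    intro r hr
    obtain ⟨hr1, hrN, hgcd⟩ := hr
    have hcop : Nat.Coprime r N := hgcd
    set u := ZMod.unitOfCoprime r hcop with hu
    have hur : (u : ZMod N) = (r : ℕ) := rfl
    have hinv : ((r : ℕ) : ZMod N)⁻¹ = ((u⁻¹ : (ZMod N)ˣ) : ZMod N) := by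
      rw [← hur, ZMod.inv_coe_unit]
    have hgr : g r = ((u⁻¹ : (ZMod N)ˣ) : ZMod N).val := by rw [hg]; simp [hinv]
    have hcop' : Nat.Coprime (g r) N := by
      rw [hgr]; exact ZMod.val_coe_unit_coprime u⁻¹
    have hgrN : g r < N := ZMod.val_lt _
    have hgr1 : 1 ≤ g r := by
      rcases Nat.eq_zero_or_pos (g r) with h0 | h; swap
      · exact h
      exfalso
      rw [h0] at hcop'
      have : N = 1 := by simpa [Nat.coprime_zero_left] using hcop'
      omega
    have hcast : ((g r : ℕ) : ZMod N) = ((u⁻¹ : (ZMod N)ˣ) : ZMod N) := by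
      rw [hgr, ZMod.natCast_val, ZMod.cast_id]
    have hgg : g (g r) = r := by
      rw [hg]
      simp only
      rw [hcast, ZMod.inv_coe_unit, inv_inv, hur, ZMod.val_natCast, Nat.mod_eq_of_lt hrN]
    exact ⟨⟨hgr1, hgrN, hcop'⟩, hgg⟩
  have heq : Set.EqOn (fun r => Cinv N (staircase N r)) g S := by
    intro r hr
    obtain ⟨hr1, hrN, hgcd⟩ := hr
    exact cinv_staircase_eq N hN r hr1 hrN hgcd
  refine Set.BijOn.congr ?_ heq.symm
  refine ⟨fun r hr => (hmem r hr).1, ?_, ?_⟩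
  · intro a ha b hb hab
    have := congrArg g hab
    rw [(hmem a ha).2, (hmem b hb).2] at this
    exact this
  · intro p hp
    exact ⟨g p, (hmem p hp).1, (hmem p hp).2⟩
end

section
/- Fix a divisor q of N with 2 ≤ q < N. Then the map r ↦ C(F_{q,r}) is a bijection from the set {r : 1 ≤ r < q, gcd(q,r) = 1} onto the set {(N/q)·p : 1 ≤ p < q, gcd(p,q) = 1}. In particular, for every admissible r the value C(F_{q,r}) is a multiple of N/q of the form (N/q)·p with p coprime to q, distinct r give distinct values, and every such value is attained. -/
lemma inv_facts (q r : ℕ) (hq2 : 2 ≤ q) (hrq : r < q) (hgcd : Nat.gcd q r = 1) :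
    1 ≤ ((r : ZMod q)⁻¹).val ∧ ((r : ZMod q)⁻¹).val < q ∧
    Nat.gcd q ((r : ZMod q)⁻¹).val = 1 ∧ (((r : ZMod q)⁻¹).val * r) % q = 1 := by
  haveI : NeZero q := ⟨by omega⟩
  set s := ((r : ZMod q)⁻¹).val with hs
  have hunit : IsUnit (r : ZMod q) := by
    rw [ZMod.isUnit_iff_coprime]; exact Nat.coprime_comm.mp hgcd
  have hinv : (r : ZMod q)⁻¹ * r = 1 := ZMod.inv_mul_of_unit _ hunit
  have hcast : ((s : ℕ) : ZMod q) = (r : ZMod q)⁻¹ := by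
    simp [hs, ZMod.natCast_val, ZMod.cast_id]
  have hsr : ((s * r : ℕ) : ZMod q) = ((1 : ℕ) : ZMod q) := by
    push_cast [hcast]; simpa using hinv
  rw [ZMod.natCast_eq_natCast_iff] at hsr
  have hsrm : (s * r) % q = 1 := by
    have : (1 : ℕ) % q = 1 := Nat.mod_eq_of_lt (by omega)
    unfold Nat.ModEq at hsr; omega
  have hslt : s < q := ZMod.val_lt _
  have hs1 : 1 ≤ s := by
    rcases Nat.eq_zero_or_pos s with h | h
    · exfalso; simp [h] at hsrm
    · exact h
  have hsunit : IsUnit ((s : ℕ) : ZMod q) := by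
    rw [hcast]; exact IsUnit.of_mul_eq_one _ hinv
  rw [ZMod.isUnit_iff_coprime] at hsunit
  exact ⟨hs1, hslt, Nat.coprime_comm.mp hsunit, hsrm⟩

lemma inv_invol (q r : ℕ) (hq2 : 2 ≤ q) (hrq : r < q) (hgcd : Nat.gcd q r = 1) :
    ((((((r : ZMod q)⁻¹).val : ℕ)) : ZMod q)⁻¹).val = r := by
  haveI : NeZero q := ⟨by omega⟩
  have hunit : IsUnit (r : ZMod q) := by
    rw [ZMod.isUnit_iff_coprime]; exact Nat.coprime_comm.mp hgcd
  have hinv : (r : ZMod q)⁻¹ * r = 1 := ZMod.inv_mul_of_unit _ hunit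
  have hcast : ((((r : ZMod q)⁻¹).val : ℕ) : ZMod q) = (r : ZMod q)⁻¹ := by
    simp [ZMod.natCast_val, ZMod.cast_id]
  rw [hcast]
  have hu2 : IsUnit ((r : ZMod q)⁻¹) := IsUnit.of_mul_eq_one _ hinv
  have h2 : ((r : ZMod q)⁻¹)⁻¹ * (r : ZMod q)⁻¹ = 1 := ZMod.inv_mul_of_unit _ hu2
  have : ((r : ZMod q)⁻¹)⁻¹ = (r : ZMod q) := by
    calc ((r : ZMod q)⁻¹)⁻¹ = ((r : ZMod q)⁻¹)⁻¹ * ((r : ZMod q)⁻¹ * r) := by rw [hinv, mul_one]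
    _ = (((r : ZMod q)⁻¹)⁻¹ * (r : ZMod q)⁻¹) * r := by ring
    _ = r := by rw [h2, one_mul]
  rw [this, ZMod.val_cast_of_lt hrq]

lemma Cinv_canonical (N q r : ℕ) (hq2 : 2 ≤ q) (hqN : q < N) (hdvd : q ∣ N)
    (hr1 : 1 ≤ r) (hrq : r < q) (hs1 : 1 ≤ ((r : ZMod q)⁻¹).val)
    (hsq : ((r : ZMod q)⁻¹).val < q)
    (hsrm : ((((r : ZMod q)⁻¹).val) * r) % q = 1) :
    Cinv N (canonicalCircuit N q r) = (N / q) * ((r : ZMod q)⁻¹).val := by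
  set s := ((r : ZMod q)⁻¹).val with hsdef
  set m := N / q with hmdef
  have hm : q * m = N := by rw [hmdef, mul_comm]; exact Nat.div_mul_cancel hdvd
  have hm0 : 0 < m := by rw [hmdef]; exact Nat.div_pos (by omega) (by omega)
  have hN0 : 0 < N := by omega
  set t := s * r / q with htdef
  have ht : s * r = q * t + 1 := by
    have h := Nat.mod_add_div (s * r) q
    rw [hsrm, ← htdef] at h
    omega
  have hdivlt : ∀ x : ℕ, x < N → x / m < q := by
    intro x hx
    exact Nat.div_lt_of_lt_mul (by rw [mul_comm]; omega)
  have key : ∀ l : Fin N,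
      (∃ k : Fin N, k < l ∧ canonicalCircuit N q r k = canonicalCircuit N q r l + 1)
      ↔ q ≤ l.val / m + s := by
    intro l
    set j := l.val / m with hjdef
    set i := l.val % m with hidef
    have hl : m * j + i = l.val := Nat.div_add_mod l.val m
    have hj : j < q := hdivlt _ l.isLt
    have hi : i < m := Nat.mod_lt _ hm0
    constructor
    · rintro ⟨k, hkl, hFk⟩
      by_contra hcond
      push_neg at hcond
      set jk := k.val / m with hjkdef
      set ik := k.val % m with hikdef
      have hlk : m * jk + ik = k.val := Nat.div_add_mod k.val m
      have hjk : jk < q := hdivlt _ k.isLt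
      have hik : ik < m := Nat.mod_lt _ hm0
      have hq' : ((1 + jk * r + ik * q : ℕ) : ZMod N)
          = ((1 + j * r + i * q : ℕ) : ZMod N) + 1 := hFk
      have h2 := congrArg (ZMod.castHom hdvd (ZMod q)) hq'
      rw [map_add, map_one, map_natCast, map_natCast] at h2
      haveI : NeZero q := ⟨by omega⟩
      have hq0 : (q : ZMod q) = 0 := ZMod.natCast_self q
      have hsr' : (s : ZMod q) * (r : ZMod q) = 1 := by
        have h3 := congrArg (Nat.cast : ℕ → ZMod q) ht
        push_cast at h3
        linear_combination h3 + (t : ZMod q) * hq0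
      have hcastq : ((jk : ℕ) : ZMod q) = ((j + s : ℕ) : ZMod q) := by
        push_cast at h2 ⊢
        linear_combination (s : ZMod q) * h2 + ((j : ZMod q) - jk) * hsr' +
          ((s : ZMod q) * i - (s : ZMod q) * ik) * hq0
      have hjks : jk = j + s := by
        have h3 := congrArg ZMod.val hcastq
        rw [ZMod.val_cast_of_lt hjk, ZMod.val_cast_of_lt (by omega : j + s < q)] at h3
        exact h3
      have hklv : k.val < l.val := hkl
      have hms : m ≤ m * s := Nat.le_mul_of_pos_right m hs1
      have hexp : m * jk = m * j + m * s := by rw [hjks]; ring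
      omega
    · intro hcond
      set j' := j + s - q with hj'def
      set i' := (i + r + t * (m - 1)) % m with hi'def
      set K := (i + r + t * (m - 1)) / m with hKdef
      have hKi : m * K + i' = i + r + t * (m - 1) := Nat.div_add_mod _ m
      have htm : t * m = t * (m - 1) + t := by
        conv_lhs => rw [show m = (m - 1) + 1 by omega]
        ring
      have hi' : i' < m := Nat.mod_lt _ hm0
      have hj'1 : j' + 1 ≤ j := by omega
      have hjm : j' * m + m ≤ j * m := by
        have h4 : (j' + 1) * m ≤ j * m := Nat.mul_le_mul_right m hj'1
        have h5 : (j' + 1) * m = j' * m + m := by ring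
        omega
      have hkval : j' * m + i' < N := by
        have h5 : j * m = m * j := by ring
        omega
      refine ⟨⟨j' * m + i', hkval⟩, ?_, ?_⟩
      · show j' * m + i' < l.val
        have h5 : j * m = m * j := by ring
        omega
      · have hdiv : (j' * m + i') / m = j' := by
          rw [add_comm, Nat.add_mul_div_right _ _ hm0, Nat.div_eq_of_lt hi', zero_add]
        have hmod : (j' * m + i') % m = i' := by
          rw [add_comm, Nat.add_mul_mod_self_right, Nat.mod_eq_of_lt hi']
        show ((1 + ((j' * m + i') / m) * r + ((j' * m + i') % m) * q : ℕ) : ZMod N)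
          = ((1 + j * r + i * q : ℕ) : ZMod N) + 1
        rw [hdiv, hmod]
        have e1 : ((j' : ℕ) : ZMod N) = (j : ZMod N) + (s : ZMod N) - (q : ZMod N) := by
          have h6 : j' + q = j + s := by omega
          have h7 := congrArg (Nat.cast : ℕ → ZMod N) h6
          push_cast at h7
          linear_combination h7
        have e2 : ((i' : ℕ) : ZMod N) = (i : ZMod N) + (r : ZMod N) + (t : ZMod N) * m
            - (m : ZMod N) * K - (t : ZMod N) := by
          have h6 : m * K + i' + t = i + r + t * m := by omega
          have h7 := congrArg (Nat.cast : ℕ → ZMod N) h6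
          push_cast at h7
          linear_combination h7
        have e3 : (s : ZMod N) * (r : ZMod N) = (q : ZMod N) * (t : ZMod N) + 1 := by
          have h7 := congrArg (Nat.cast : ℕ → ZMod N) ht
          push_cast at h7
          linear_combination h7
        have e4 : (q : ZMod N) * (m : ZMod N) = 0 := by
          have h7 := congrArg (Nat.cast : ℕ → ZMod N) hm
          push_cast at h7
          rw [h7]; exact ZMod.natCast_self N
        push_cast
        linear_combination (r : ZMod N) * e1 + (q : ZMod N) * e2 + e3
          + ((t : ZMod N) - (K : ZMod N)) * e4
  -- count
  have hlt : (q - s) * m < N := by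
    have h1 : (q - s) * m ≤ (q - 1) * m := Nat.mul_le_mul_right m (by omega)
    have h2 : (q - 1) * m = q * m - m := by rw [Nat.sub_mul, one_mul]
    omega
  have hset : Finset.univ.filter
      (fun l : Fin N => ∃ k : Fin N, k < l ∧
        canonicalCircuit N q r k = canonicalCircuit N q r l + 1)
      = Finset.Ici (⟨(q - s) * m, hlt⟩ : Fin N) := by
    ext l
    simp only [Finset.mem_filter, Finset.mem_univ, true_and, Finset.mem_Ici, Fin.le_def, key l]
    have hd : (q - s) * m ≤ l.val ↔ q - s ≤ l.val / m := (Nat.le_div_iff_mul_le hm0).symm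
    omega
  rw [Cinv, hset, Fin.card_Ici]
  have hval : (⟨(q - s) * m, hlt⟩ : Fin N).val = (q - s) * m := rfl
  rw [hval]
  have h1 : (q - s) * m + s * m = q * m := by
    rw [← Nat.add_mul]
    congr 1
    omega
  have h2 : s * m = m * s := Nat.mul_comm s m
  omega

/-- For a fixed divisor `q` of `N` with `2 ≤ q < N`, the map
`r ↦ C(F_{q,r})` is a bijection from `{r : 1 ≤ r < q, gcd(q,r) = 1}` onto
`{(N/q)·p : 1 ≤ p < q, gcd(p,q) = 1}`. -/
theorem Cinv_canonical_bijOn (N q : ℕ) (hN : 2 ≤ N) (hq2 : 2 ≤ q) (hqN : q < N)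
    (hdvd : q ∣ N) :
    Set.BijOn (fun r => Cinv N (canonicalCircuit N q r))
      {r : ℕ | 1 ≤ r ∧ r < q ∧ Nat.gcd q r = 1}
      {m : ℕ | ∃ p, 1 ≤ p ∧ p < q ∧ Nat.gcd p q = 1 ∧ m = (N / q) * p} := by
  have hm0 : 0 < N / q := Nat.div_pos (by omega) (by omega)
  refine ⟨?_, ?_, ?_⟩
  · rintro r ⟨hr1, hrq, hgcd⟩
    obtain ⟨hs1, hsq, hgcds, hsrm⟩ := inv_facts q r hq2 hrq hgcd
    exact ⟨((r : ZMod q)⁻¹).val, hs1, hsq, by rw [Nat.gcd_comm]; exact hgcds,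
      Cinv_canonical N q r hq2 hqN hdvd hr1 hrq hs1 hsq hsrm⟩
  · rintro r1 ⟨h11, h12, h13⟩ r2 ⟨h21, h22, h23⟩ heq
    obtain ⟨hs11, hs12, _, hsr1⟩ := inv_facts q r1 hq2 h12 h13
    obtain ⟨hs21, hs22, _, hsr2⟩ := inv_facts q r2 hq2 h22 h23
    simp only [Cinv_canonical N q r1 hq2 hqN hdvd h11 h12 hs11 hs12 hsr1,
      Cinv_canonical N q r2 hq2 hqN hdvd h21 h22 hs21 hs22 hsr2] at heq
    have hs : ((r1 : ZMod q)⁻¹).val = ((r2 : ZMod q)⁻¹).val :=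
      Nat.eq_of_mul_eq_mul_left hm0 heq
    calc r1 = (((((r1 : ZMod q)⁻¹).val : ℕ) : ZMod q)⁻¹).val :=
          (inv_invol q r1 hq2 h12 h13).symm
      _ = (((((r2 : ZMod q)⁻¹).val : ℕ) : ZMod q)⁻¹).val := by rw [hs]
      _ = r2 := inv_invol q r2 hq2 h22 h23
  · rintro x ⟨p, hp1, hpq, hpgcd, rfl⟩
    have hgcdqp : Nat.gcd q p = 1 := by rw [Nat.gcd_comm]; exact hpgcd
    obtain ⟨hr1, hrq, hgcdr, _⟩ := inv_facts q p hq2 hpq hgcdqp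
    refine ⟨((p : ZMod q)⁻¹).val, ⟨hr1, hrq, hgcdr⟩, ?_⟩
    obtain ⟨hs1, hsq, _, hsrm⟩ := inv_facts q _ hq2 hrq hgcdr
    simp only
    rw [Cinv_canonical N q _ hq2 hqN hdvd hr1 hrq hs1 hsq hsrm,
      inv_invol q p hq2 hpq hgcdqp]
end

section
/- For every integer N ≥ 2, the map (q,r) ↦ C(F_{q,r}) is injective on Q_N: if (q,r), (q',r') ∈ Q_N and C(F_{q,r}) = C(F_{q',r'}), then q = q' and r = r'. -/
lemma card_filter_le_val (N c : ℕ) :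
    (Finset.univ.filter (fun l : Fin N => c ≤ l.val)).card = N - c := by
  rw [← Finset.card_image_of_injective _ Fin.val_injective]
  have h : (Finset.univ.filter (fun l : Fin N => c ≤ l.val)).image Fin.val
      = Finset.Ico c N := by
    ext x
    simp only [Finset.mem_image, Finset.mem_filter, Finset.mem_univ, true_and, Finset.mem_Ico]
    constructor
    · rintro ⟨l, hl, rfl⟩; exact ⟨hl, l.isLt⟩
    · rintro ⟨h1, h2⟩; exact ⟨⟨x, h2⟩, h1, rfl⟩
  rw [h, Nat.card_Ico]

lemma cinv_canonical (N q r : ℕ) (hN : 0 < N) (hq2 : 2 ≤ q) (hqN : q ∣ N)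
    (hrq : r < q) (hgcd : Nat.gcd q r = 1) :
    Cinv N (canonicalCircuit N q r) = ((r : ZMod q)⁻¹).val * (N / q) := by
  haveI : NeZero q := ⟨by omega⟩
  set m := N / q with hm
  have hqm : q * m = N := Nat.mul_div_cancel' hqN
  have hm0 : 0 < m := Nat.div_pos (Nat.le_of_dvd hN hqN) (by omega)
  set s := ((r : ZMod q)⁻¹).val with hs
  have hsq : s < q := ZMod.val_lt _
  have hcop : Nat.Coprime r q := Nat.Coprime.symm hgcd
  have hunit : (r : ZMod q) * ((r : ZMod q)⁻¹) = 1 := ZMod.coe_mul_inv_eq_one r hcop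
  have hsc : ((s : ℕ) : ZMod q) = (r : ZMod q)⁻¹ := ZMod.natCast_rightInverse _
  have hu : IsUnit ((r : ℕ) : ZMod q) := (ZMod.isUnit_iff_coprime r q).mpr hcop
  have hsr : ((r * s : ℕ) : ZMod q) = ((1 : ℕ) : ZMod q) := by
    push_cast
    rw [hsc]; exact hunit
  have hmodrs : (r * s) % q = 1 % q := (ZMod.natCast_eq_natCast_iff _ _ _).mp hsr
  have h1q : 1 % q = 1 := Nat.mod_eq_of_lt (by omega)
  obtain ⟨t, ht⟩ : ∃ t, r * s = q * t + 1 := by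
    refine ⟨r * s / q, ?_⟩
    conv_lhs => rw [← Nat.div_add_mod (r * s) q]
    rw [hmodrs, h1q]
  have hs1 : 1 ≤ s := by
    rcases Nat.eq_zero_or_pos s with h | h
    · rw [h, mul_zero] at ht; omega
    · exact h
  have htr : t < r := by nlinarith
  have hcs : Nat.Coprime s q := by
    have h1 : Nat.gcd s q ∣ r * s := Dvd.dvd.mul_left (Nat.gcd_dvd_left s q) r
    have h2 : Nat.gcd s q ∣ q * t := Dvd.dvd.mul_right (Nat.gcd_dvd_right s q) t
    have h3 := Nat.dvd_sub h1 h2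
    rw [ht] at h3
    simpa using h3
  have key : ∀ l : Fin N,
      (∃ k : Fin N, k < l ∧ canonicalCircuit N q r k = canonicalCircuit N q r l + 1)
        ↔ q - s ≤ l.val / m := by
    intro l
    constructor
    · rintro ⟨k, hkl, hF⟩
      by_contra hcon
      push_neg at hcon
      have hc : ((1 + (k.val / m) * r + (k.val % m) * q : ℕ) : ZMod N)
          = ((2 + (l.val / m) * r + (l.val % m) * q : ℕ) : ZMod N) := by
        simp only [canonicalCircuit, ← hm] at hF
        push_cast at hF ⊢
        linear_combination hF
      have hmodN := (ZMod.natCast_eq_natCast_iff _ _ _).mp hc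
      have hmodq := hmodN.of_dvd hqN
      have h2 : ((1 + k.val / m * r + k.val % m * q : ℕ) : ZMod q)
          = ((2 + l.val / m * r + l.val % m * q : ℕ) : ZMod q) :=
        (ZMod.natCast_eq_natCast_iff _ _ _).mpr hmodq
      push_cast at h2
      rw [ZMod.natCast_self, mul_zero, add_zero, mul_zero, add_zero] at h2
      have h3 : ((k.val / m : ℕ) : ZMod q) * r
          = (((l.val / m : ℕ) : ZMod q) + ((s : ℕ) : ZMod q)) * r := by
        rw [hsc]; linear_combination h2 - hunit
      have h4 : ((k.val / m : ℕ) : ZMod q) = ((l.val / m + s : ℕ) : ZMod q) := by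
        push_cast
        exact hu.mul_right_cancel h3
      have h5 : k.val / m ≡ l.val / m + s [MOD q] := (ZMod.natCast_eq_natCast_iff _ _ _).mp h4
      have hkq : k.val / m < q := Nat.div_lt_of_lt_mul (by rw [mul_comm m q, hqm]; exact k.isLt)
      have h6 : k.val / m = l.val / m + s := h5.eq_of_lt_of_lt hkq (by omega)
      have hlk : l.val < k.val := by
        calc l.val = (l.val / m) * m + l.val % m := by
              rw [mul_comm]; exact (Nat.div_add_mod l.val m).symm
          _ < (l.val / m) * m + m := by have := Nat.mod_lt l.val hm0; omega
          _ ≤ (l.val / m) * m + s * m := by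
              have : m ≤ s * m := Nat.le_mul_of_pos_left m hs1
              omega
          _ = (l.val / m + s) * m := (add_mul _ _ _).symm
          _ = (k.val / m) * m := by rw [h6]
          _ ≤ k.val := Nat.div_mul_le_self _ _
      rw [Fin.lt_def] at hkl
      omega
    · intro hge
      set j := l.val / m with hj
      set i := l.val % m with hi
      have hlji : m * j + i = l.val := Nat.div_add_mod l.val m
      have hjq : j < q := Nat.div_lt_of_lt_mul (by rw [mul_comm m q, hqm]; exact l.isLt)
      have hiq : i < m := Nat.mod_lt l.val hm0
      set c := j + s - q with hcdef
      have hcq : j + s = q + c := by omega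
      have hcj : c < j := by omega
      set u := r - t with hudef
      have hur : r = t + u := by omega
      have hu1 : 1 ≤ u := by omega
      set ki := (i + u) % m with hki
      have hkim : ki < m := Nat.mod_lt _ hm0
      set k := c * m + ki with hk
      have hklt : k < l.val := by
        calc k = c * m + ki := hk
          _ < c * m + m := by omega
          _ = (c + 1) * m := by ring
          _ ≤ j * m := Nat.mul_le_mul_right m (by omega)
          _ ≤ j * m + i := Nat.le_add_right _ _
          _ = l.val := by rw [← hlji]; ring
      have hkN : k < N := lt_trans hklt l.isLt
      have hkd : k / m = c := by
        rw [hk, mul_comm c m, Nat.mul_add_div hm0, Nat.div_eq_of_lt hkim, add_zero]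
      have hkm : k % m = ki := by
        rw [hk, mul_comm c m, Nat.mul_add_mod, Nat.mod_eq_of_lt hkim]
      refine ⟨⟨k, hkN⟩, by rw [Fin.lt_def]; exact hklt, ?_⟩
      simp only [canonicalCircuit, ← hm, hkd, hkm, ← hj, ← hi]
      have hnat : 1 + c * r + (i + u) * q = 2 + j * r + i * q := by
        have ht' : (r : ℤ) * s = q * t + 1 := by exact_mod_cast ht
        have hcq' : (j : ℤ) + s = q + c := by exact_mod_cast hcq
        have hur' : (r : ℤ) = t + u := by exact_mod_cast hur
        zify
        linear_combination ht' - (r : ℤ) * hcq' - (q : ℤ) * hur'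
      have hme : (1 + c * r + ki * q) ≡ (2 + j * r + i * q) [MOD N] := by
        calc 1 + c * r + ki * q ≡ 1 + c * r + (i + u) * q [MOD N] := by
              refine Nat.ModEq.add_left _ ?_
              have := (Nat.mod_modEq (i + u) m).mul_right' q
              rwa [mul_comm m q, hqm] at this
          _ = 2 + j * r + i * q := hnat
      have := (ZMod.natCast_eq_natCast_iff _ _ _).mpr hme
      rw [this]
      push_cast
      ring
  unfold Cinv
  rw [Finset.filter_congr (fun l _ => key l)]
  rw [Finset.filter_congr (fun (l : Fin N) _ =>
    (Nat.le_div_iff_mul_le hm0 : q - s ≤ l.val / m ↔ (q - s) * m ≤ l.val))]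
  rw [card_filter_le_val]
  rw [← hqm, ← Nat.sub_mul]
  congr 1
  omega

lemma inv_val_inj (q r r' : ℕ) (hq2 : 2 ≤ q) (hr : r < q) (hr' : r' < q)
    (hgr : Nat.gcd q r = 1) (hgr' : Nat.gcd q r' = 1)
    (h : ((r : ZMod q)⁻¹).val = ((r' : ZMod q)⁻¹).val) : r = r' := by
  haveI : NeZero q := ⟨by omega⟩
  have h1 : ((r : ℕ) : ZMod q)⁻¹ = ((r' : ℕ) : ZMod q)⁻¹ := ZMod.val_injective q h
  have hu1 : (r : ZMod q) * ((r : ZMod q)⁻¹) = 1 := ZMod.coe_mul_inv_eq_one r (Nat.Coprime.symm hgr)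
  have hu2 : (r' : ZMod q) * ((r' : ZMod q)⁻¹) = 1 := ZMod.coe_mul_inv_eq_one r' (Nat.Coprime.symm hgr')
  rw [← h1] at hu2
  have hcu : IsUnit ((r : ZMod q)⁻¹) :=
    IsUnit.of_mul_eq_one _ (by rw [mul_comm]; exact hu1)
  have : ((r : ℕ) : ZMod q) = ((r' : ℕ) : ZMod q) := hcu.mul_right_cancel (hu1.trans hu2.symm)
  have := (ZMod.natCast_eq_natCast_iff _ _ _).mp this
  exact this.eq_of_lt_of_lt hr hr'

/-- The map `(q,r) ↦ C(F_{q,r})` is injective on `Q_N`. -/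
theorem Cinv_canonical_injOn (N : ℕ) (hN : 2 ≤ N) :
    ∀ qr ∈ QN N, ∀ qr' ∈ QN N,
      Cinv N (canonicalCircuit N qr.1 qr.2) = Cinv N (canonicalCircuit N qr'.1 qr'.2) →
      qr = qr' := by
  rintro ⟨q, r⟩ ⟨hq2, hqN', hqdvd, hr1, hrq, hg⟩ ⟨q', r'⟩ ⟨hq2', hqN'', hqdvd', hr1', hrq', hg'⟩ h
  simp only at hq2 hqN' hqdvd hr1 hrq hg hq2' hqN'' hqdvd' hr1' hrq' hg' h
  have hN0 : 0 < N := by omega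
  rw [cinv_canonical N q r hN0 hq2 hqdvd hrq hg,
      cinv_canonical N q' r' hN0 hq2' hqdvd' hrq' hg'] at h
  haveI : NeZero q := ⟨by omega⟩
  haveI : NeZero q' := ⟨by omega⟩
  set s := ((r : ZMod q)⁻¹).val with hs
  set s' := ((r' : ZMod q')⁻¹).val with hs'
  set m := N / q with hm
  set m' := N / q' with hm'
  have hqm : q * m = N := Nat.mul_div_cancel' hqdvd
  have hqm' : q' * m' = N := Nat.mul_div_cancel' hqdvd'
  have hm0 : 0 < m := Nat.div_pos (Nat.le_of_dvd hN0 hqdvd) (by omega)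
  have hm0' : 0 < m' := Nat.div_pos (Nat.le_of_dvd hN0 hqdvd') (by omega)
  have hcs : Nat.Coprime s q := by
    have hcop : Nat.Coprime r q := Nat.Coprime.symm hg
    have : ((ZMod.unitOfCoprime r hcop)⁻¹ : (ZMod q)ˣ) = ((r : ZMod q)⁻¹ : ZMod q) := by
      rw [← ZMod.inv_coe_unit, ZMod.coe_unitOfCoprime]
    have h2 := ZMod.val_coe_unit_coprime ((ZMod.unitOfCoprime r hcop)⁻¹)
    rwa [this] at h2
  have hcs' : Nat.Coprime s' q' := by
    have hcop : Nat.Coprime r' q' := Nat.Coprime.symm hg'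
    have : ((ZMod.unitOfCoprime r' hcop)⁻¹ : (ZMod q')ˣ) = ((r' : ZMod q')⁻¹ : ZMod q') := by
      rw [← ZMod.inv_coe_unit, ZMod.coe_unitOfCoprime]
    have h2 := ZMod.val_coe_unit_coprime ((ZMod.unitOfCoprime r' hcop)⁻¹)
    rwa [this] at h2
  have hg1 : Nat.gcd (s * m) N = m := by
    rw [← hqm, Nat.gcd_mul_right, hcs, one_mul]
  have hg2 : Nat.gcd (s' * m') N = m' := by
    rw [← hqm', Nat.gcd_mul_right, hcs', one_mul]
  have hmm : m = m' := by rw [← hg1, ← hg2, h]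
  have hqq : q = q' := by
    have : q * m = q' * m := by rw [hqm, hmm, hqm']
    exact Nat.eq_of_mul_eq_mul_right hm0 this
  subst hqq
  have hss : s = s' := by
    have : s * m = s' * m := by rw [h, hmm]
    exact Nat.eq_of_mul_eq_mul_right hm0 this
  have hrr : r = r' := inv_val_inj q r r' hq2 hrq hrq' hg hg' (by rw [← hs, ← hs']; exact hss)
  simp [hrr]
end

section
/- Let G be a group, N ≥ 2 an integer, and s, v ∈ G with s^N = 1. Let q be a divisor of N with q ≥ 2 and let r ≥ 1 be an integer. Then s^{−qr} · ( s^r · (s^q v)^{N/q} )^q = f_{(q−1)r} · f_{(q−2)r} ⋯ f_r · f_0, where v_i := s^{−i} v s^i and f_m := v_{m+(N/q−1)q} ⋯ v_{m+q} · v_m. In particular the Floquet operator F_{q,r} of the canonical circuit equals s^{−qr} times the q-th power of its root F̃_{q,r} := s^r f_0. -/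
/-- The translated gate `v_i := s^{-i} v s^i`. -/
def vgate {G : Type*} [Group G] (s v : G) (i : ℤ) : G := s ^ (-i) * v * s ^ i

/-- The layer `f_m := v_{m+(N/q−1)q} ⋯ v_{m+q} · v_m`. -/
def layer {G : Type*} [Group G] (s v : G) (N q : ℕ) (m : ℤ) : G :=
  (((List.range (N / q)).reverse).map (fun k => vgate s v (m + (k : ℤ) * (q : ℤ)))).prod

/-- Far-commutation: gates commute unless their site difference is ±1 mod N. -/
def FarCommute {G : Type*} [Group G] (s v : G) (N : ℕ) : Prop :=
  ∀ i j : ℤ, ¬ (i - j ≡ 1 [ZMOD (N : ℤ)]) → ¬ (i - j ≡ -1 [ZMOD (N : ℤ)]) →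
    vgate s v i * vgate s v j = vgate s v j * vgate s v i

/-- The Floquet operator `F = f_{(q−1)r} ⋯ f_r · f_0`. -/
def floquet {G : Type*} [Group G] (s v : G) (N q r : ℕ) : G :=
  (((List.range q).reverse).map (fun j => layer s v N q ((j : ℤ) * (r : ℤ)))).prod

lemma coeM_eq (l : List ℕ) :
    (do let a ← l; pure ((a : ℤ)) : List ℤ) = l.map (fun a : ℕ => (a : ℤ)) := by
  induction l with
  | nil => rfl
  | cons a t ih =>
    simp only [List.bind_eq_flatMap, List.flatMap_cons] at *
    rw [ih]
    rfl

lemma layer_eq {G : Type*} [Group G] (s v : G) (N q : ℕ) (m : ℤ) :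
    layer s v N q m
      = (((List.range (N / q)).reverse).map
          (fun k : ℕ => vgate s v (m + (k : ℤ) * (q : ℤ)))).prod := by
  rw [layer, coeM_eq, List.map_map]; rfl

lemma floquet_eq {G : Type*} [Group G] (s v : G) (N q r : ℕ) :
    floquet s v N q r
      = (((List.range q).reverse).map
          (fun j : ℕ => layer s v N q ((j : ℤ) * (r : ℤ)))).prod := by
  rw [floquet, coeM_eq, List.map_map]; rfl

lemma conj_prod {G : Type*} [Group G] (g : G) (l : List G) :
    g * l.prod * g⁻¹ = (l.map fun x => g * x * g⁻¹).prod := by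
  induction l with
  | nil => simp
  | cons a t ih => rw [List.map_cons, List.prod_cons, List.prod_cons, ← ih]; group

lemma vgate_conj {G : Type*} [Group G] (s v : G) (i m : ℤ) :
    s ^ (-m) * vgate s v i * s ^ m = vgate s v (i + m) := by
  simp only [vgate, neg_add, zpow_add]
  group

lemma layer_conj {G : Type*} [Group G] (s v : G) (N q : ℕ) (m : ℤ) :
    s ^ (-m) * layer s v N q 0 * s ^ m = layer s v N q m := by
  have h : s ^ m = (s ^ (-m) : G)⁻¹ := by rw [zpow_neg, inv_inv]
  rw [layer_eq, layer_eq, h, conj_prod, List.map_map]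
  congr 1
  apply List.map_congr_left
  intro k _
  simp only [Function.comp_apply, zero_add, ← h]
  rw [vgate_conj, add_comm]

lemma aux1 {G : Type*} [Group G] (s v : G) (q : ℕ) :
    ∀ n : ℕ, (s ^ q * v) ^ n
      = s ^ (q * n)
        * (((List.range n).reverse).map (fun k : ℕ => vgate s v ((k : ℤ) * (q : ℤ)))).prod := by
  intro n
  induction n with
  | zero => simp
  | succ n ih =>
    rw [pow_succ', ih, List.range_succ, List.reverse_append]
    simp only [List.reverse_singleton, List.singleton_append, List.map_cons, List.prod_cons]
    have h1 : (s : G) ^ (q * (n+1)) = s ^ q * s ^ (q * n) := by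
      rw [← pow_add]; ring_nf
    have h2 : v * s ^ (q * n) = s ^ (q * n) * vgate s v ((n : ℤ) * (q : ℤ)) := by
      have h3 : (s : G) ^ (q * n) = s ^ (((n : ℤ) * (q : ℤ))) := by
        rw [← zpow_natCast]; norm_cast; ring
      rw [h3, vgate]
      group
    rw [h1, mul_assoc (s^q) v, ← mul_assoc v, h2]
    simp [mul_assoc]
  
lemma pow_conj {G : Type*} [Group G] (a L : G) :
    ∀ n : ℕ, (a * L) ^ n
      = a ^ n * (((List.range n).reverse).map (fun j : ℕ => (a ^ j)⁻¹ * L * a ^ j)).prod := by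
  intro n
  induction n with
  | zero => simp
  | succ n ih =>
    rw [pow_succ', ih, List.range_succ, List.reverse_append]
    simp only [List.reverse_singleton, List.singleton_append, List.map_cons, List.prod_cons]
    rw [pow_succ' a n]
    simp [mul_assoc]

/-- `s^{−qr} (s^r (s^q v)^{N/q})^q = f_{(q−1)r} ⋯ f_r · f_0`; in
particular the Floquet operator of the canonical circuit equals `s^{−qr}` times the `q`-th
power of its root `F̃_{q,r} = s^r f_0`. -/
theorem floquet_eq_root_pow {G : Type*} [Group G] (N : ℕ) (hN : 2 ≤ N)
    (s v : G) (hs : s ^ N = 1) (q : ℕ) (hq : q ∣ N) (hq2 : 2 ≤ q)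
    (r : ℕ) (hr : 1 ≤ r) :
    (s ^ (q * r))⁻¹ * (s ^ r * (s ^ q * v) ^ (N / q)) ^ q = floquet s v N q r ∧
    floquet s v N q r = (s ^ (q * r))⁻¹ * (s ^ r * layer s v N q 0) ^ q := by
  have hA : (s ^ q * v) ^ (N / q) = layer s v N q 0 := by
    rw [aux1, Nat.mul_div_cancel' hq, hs, one_mul, layer_eq]
    congr 1
    apply List.map_congr_left
    intro k _
    rw [zero_add]
  have hB : (s ^ (q * r) : G)⁻¹ * (s ^ r * layer s v N q 0) ^ q = floquet s v N q r := by
    rw [pow_conj, floquet_eq]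
    have hpow : ((s : G) ^ r) ^ q = s ^ (q * r) := by rw [← pow_mul]; ring_nf
    rw [hpow, ← mul_assoc, inv_mul_cancel, one_mul]
    congr 1
    apply List.map_congr_left
    intro j _
    have h1 : ((s:G)^r)^j = s ^ ((j:ℤ)*(r:ℤ)) := by
      rw [← pow_mul, ← zpow_natCast]; norm_cast; ring
    rw [h1, ← zpow_neg, layer_conj]
  exact ⟨by rw [hA, hB], hB.symm⟩
end
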